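/- arXiv:1109.2207 — 4 statements merged into one kernel-verified Lean document; each statement's English description precedes it below -/
import Mathlib

section
/- Let K be a number field containing a primitive third root of unity, and let E be an elliptic curve over K with a point Q of order 3 defined over K. Suppose P is a point of order 3 on E (over an algebraic closure of K) with P ∉ ⟨Q⟩ whose x-coordinate lies in K. Then the y-coordinate of P also lies in K, and hence the full 3-torsion E[3] is defined over K. -/
open WeierstrassCurve WeierstrassCurve.Affine
open scoped WeierstrassCurve.Affine

section ThreeTorsionAux

open Classical

variable {F : Type*} [Field F] {W : Affine F}

private lemma tt_some_eq {x₁ y₁ x₂ y₂ : F} (h₁ : W.Nonsingular x₁ y₁)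
    (h₂ : W.Nonsingular x₂ y₂) (hx : x₁ = x₂) (hy : y₁ = y₂) :
    Point.some _ _ h₁ = Point.some _ _ h₂ := by
  subst hx; subst hy; rfl

private lemma tt_eq_or_eq_neg {x₁ y₁ x₂ y₂ : F} (h₁ : W.Nonsingular x₁ y₁)
    (h₂ : W.Nonsingular x₂ y₂) (hx : x₁ = x₂) :
    Point.some _ _ h₁ = Point.some _ _ h₂ ∨ Point.some _ _ h₁ = -Point.some _ _ h₂ := by
  rcases Y_eq_of_X_eq h₁.1 h₂.1 hx with hy | hy
  · exact Or.inl (tt_some_eq h₁ h₂ hx hy)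
  · right
    rw [Point.neg_some]
    exact tt_some_eq h₁ _ hx hy

private lemma tt_point_cases (R : W.Point) (h0 : R ≠ 0) :
    ∃ (x y : F) (h' : W.Nonsingular x y), R = Point.some _ _ h' := by
  cases R with
  | zero => exact absurd rfl h0
  | some _ _ h' => exact ⟨_, _, h', rfl⟩

private lemma tt_psi3_root {x y : F} (h : W.Nonsingular x y) (h3 : 3 • Point.some _ _ h = 0) :
    3 * x ^ 4 + W.b₂ * x ^ 3 + 3 * W.b₄ * x ^ 2 + 3 * W.b₆ * x + W.b₈ = 0 := by
  have h3' : Point.some _ _ h + Point.some _ _ h + Point.some _ _ h = 0 := by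
    rw [show (3 : ℕ) = 2 + 1 from rfl, add_nsmul, two_nsmul, one_nsmul] at h3
    exact h3
  have hy : y ≠ W.negY x y := by
    intro hy
    have h2 : Point.some _ _ h + Point.some _ _ h = 0 := Point.add_self_of_Y_eq hy
    rw [h2, zero_add] at h3'
    exact Point.some_ne_zero h h3'
  have hadd := Point.add_self_of_Y_ne (h₁ := h) hy
  rw [hadd] at h3'
  have hneg := eq_neg_of_add_eq_zero_left h3'
  rw [Point.neg_some] at hneg
  have hx2 : W.addX x x (W.slope x x y y) = x := (Point.some.inj hneg).left
  have hd : y - W.negY x y ≠ 0 := sub_ne_zero.mpr hy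
  have hls : W.slope x x y y * (y - W.negY x y) = 3 * x ^ 2 + 2 * W.a₂ * x + W.a₄ - W.a₁ * y := by
    rw [slope_of_Y_ne rfl hy]
    exact div_mul_cancel₀ _ hd
  have heq : y ^ 2 + W.a₁ * x * y + W.a₃ * y = x ^ 3 + W.a₂ * x ^ 2 + W.a₄ * x + W.a₆ :=
    (W.equation_iff x y).mp h.1
  simp only [addX] at hx2
  have hA : (3 * x ^ 2 + 2 * W.a₂ * x + W.a₄ - W.a₁ * y) ^ 2
      + W.a₁ * (3 * x ^ 2 + 2 * W.a₂ * x + W.a₄ - W.a₁ * y) * (y - W.negY x y)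
      - (W.a₂ + 3 * x) * (y - W.negY x y) ^ 2 = 0 := by
    linear_combination (y - W.negY x y) ^ 2 * hx2 -
      ((3 * x ^ 2 + 2 * W.a₂ * x + W.a₄ - W.a₁ * y) + W.slope x x y y * (y - W.negY x y) +
        W.a₁ * (y - W.negY x y)) * hls
  simp only [negY] at hA
  simp only [WeierstrassCurve.b₂, WeierstrassCurve.b₄, WeierstrassCurve.b₆, WeierstrassCurve.b₈]
  linear_combination -hA + (-12 * x - 4 * W.a₂ - W.a₁ ^ 2) * heq

private lemma tt_mem_zmultiples {A : Type*} [AddCommGroup A] {P Q : A}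
    (h3 : (3 : ℤ) • P = 0) {k : ℤ} (h : P + P = k • Q) : P ∈ AddSubgroup.zmultiples Q := by
  refine AddSubgroup.mem_zmultiples_iff.mpr ⟨2 * k, ?_⟩
  rw [mul_smul, ← h, show (2 : ℤ) • (P + P) = (3 : ℤ) • P + P by abel, h3, zero_add]

end ThreeTorsionAux

set_option maxHeartbeats 3200000 in
open Classical in
/-- Let `K` be a number field containing a primitive third root of unity and `E` an elliptic
curve over `K` with a `K`-rational point `Q` of order 3.  If `P` is a point of order 3 on `E`
over an algebraic closure of `K`, not lying in `⟨Q⟩`, whose `x`-coordinate lies in `K`, then its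
`y`-coordinate also lies in `K`, and hence all of the 3-torsion `E[3]` is defined over `K`. -/
theorem threeTorsion_defined_over_K
    {K : Type*} [Field K] [NumberField K] (hζ : ∃ ζ : K, IsPrimitiveRoot ζ 3)
    (W : WeierstrassCurve K) (hΔ : W.Δ ≠ 0)
    (Q : (W.baseChange K).toAffine.Point) (hQ : addOrderOf Q = 3)
    (x y : AlgebraicClosure K)
    (h : (W.baseChange (AlgebraicClosure K)).toAffine.Nonsingular x y)
    (hP : addOrderOf (Point.some x y h : (W.baseChange (AlgebraicClosure K)).toAffine.Point) = 3)
    (hPQ : (Point.some x y h : (W.baseChange (AlgebraicClosure K)).toAffine.Point) ∉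
      AddSubgroup.zmultiples (Point.map (W' := W) (Algebra.ofId K (AlgebraicClosure K)) Q))
    (hx : x ∈ Set.range (algebraMap K (AlgebraicClosure K))) :
    y ∈ Set.range (algebraMap K (AlgebraicClosure K)) ∧
      ∀ R : (W.baseChange (AlgebraicClosure K)).toAffine.Point, 3 • R = 0 →
        ∃ R₀ : (W.baseChange K).toAffine.Point, Point.map (W' := W) (Algebra.ofId K (AlgebraicClosure K)) R₀ = R := by
  classical
  obtain ⟨ζ, hζ'⟩ := hζ
  have hz : ζ ^ 2 + ζ + 1 = 0 := by
    have h1 : (ζ - 1) * (ζ ^ 2 + ζ + 1) = 0 := by linear_combination hζ'.pow_eq_one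
    exact (mul_eq_zero.mp h1).resolve_left (sub_ne_zero.mpr (hζ'.ne_one (by norm_num)))
  set f := Algebra.ofId K (AlgebraicClosure K) with hfdef
  set PP : (W.baseChange (AlgebraicClosure K)).toAffine.Point := Point.some _ _ h with hPPdef
  set Q' : (W.baseChange (AlgebraicClosure K)).toAffine.Point := Point.map (W' := W) f Q with hQ'def
  have hP0 : PP ≠ 0 := by
    intro h0
    rw [h0, addOrderOf_zero] at hP
    norm_num at hP
  have hQ0 : Q ≠ 0 := by
    intro h0
    rw [h0, addOrderOf_zero] at hQ
    norm_num at hQ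
  have hQ'0 : Q' ≠ 0 := by
    intro h0
    exact hQ0 (Point.map_injective (W' := W) f (h0.trans (Point.map_zero (W' := W) f).symm))
  have h3P : (3 : ℕ) • PP = 0 := by rw [← hP]; exact addOrderOf_nsmul_eq_zero PP
  have h3Qn : (3 : ℕ) • Q = 0 := by rw [← hQ]; exact addOrderOf_nsmul_eq_zero Q
  have h3Q' : (3 : ℕ) • Q' = 0 := by
    rw [hQ'def, ← AddMonoidHom.map_nsmul, h3Qn, map_zero]
  have h3PZ : (3 : ℤ) • PP = 0 := by
    rw [show (3 : ℤ) = ((3 : ℕ) : ℤ) by norm_num, natCast_zsmul]; exact h3P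
  set S : (W.baseChange (AlgebraicClosure K)).toAffine.Point := PP + Q' with hSdef
  set T : (W.baseChange (AlgebraicClosure K)).toAffine.Point := PP - Q' with hTdef
  have h3S : (3 : ℕ) • S = 0 := by
    have hdist : (3 : ℕ) • S = 3 • PP + 3 • Q' := by rw [hSdef]; abel
    rw [hdist, h3P, h3Q', add_zero]
  have h3T : (3 : ℕ) • T = 0 := by
    have hdist : (3 : ℕ) • T = 3 • PP - 3 • Q' := by rw [hTdef]; abel
    rw [hdist, h3P, h3Q', sub_zero]
  have hS0 : S ≠ 0 := by
    intro h0
    have h0' : PP + Q' = 0 := by rw [← hSdef]; exact h0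
    have hPeq := eq_neg_of_add_eq_zero_left h0'
    exact hPQ (AddSubgroup.mem_zmultiples_iff.mpr ⟨-1, by rw [neg_smul, one_smul, hPeq]⟩)
  have hT0 : T ≠ 0 := by
    intro h0
    have h0' : PP - Q' = 0 := by rw [← hTdef]; exact h0
    have hPeq := sub_eq_zero.mp h0'
    exact hPQ (AddSubgroup.mem_zmultiples_iff.mpr ⟨1, by rw [one_smul, hPeq]⟩)
  obtain ⟨xQ, yQ, hQns, hQeq⟩ := tt_point_cases Q hQ0
  obtain ⟨x1, y1, h1ns, hQ'eq⟩ := tt_point_cases Q' hQ'0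
  obtain ⟨x3, y3, h3ns, hSeq⟩ := tt_point_cases S hS0
  obtain ⟨x4, y4, h4ns, hTeq⟩ := tt_point_cases T hT0
  have hx1y1 : x1 = f xQ ∧ y1 = f yQ := by
    have h' := hQ'eq
    rw [hQ'def, hQeq, Point.map_some] at h'
    exact ⟨(Point.some.inj h').left.symm, (Point.some.inj h').right.symm⟩
  -- the four ψ₃ equations
  have E1 := tt_psi3_root h1ns (by rw [← hQ'eq]; exact h3Q')
  have E2 := tt_psi3_root h (by rw [← hPPdef]; exact h3P)
  have E3 := tt_psi3_root h3ns (by rw [← hSeq]; exact h3S)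
  have E4 := tt_psi3_root h4ns (by rw [← hTeq]; exact h3T)
  obtain ⟨B2, hB2⟩ : ∃ b, (W.baseChange (AlgebraicClosure K)).toAffine.b₂ = b := ⟨_, rfl⟩
  obtain ⟨B4, hB4⟩ : ∃ b, (W.baseChange (AlgebraicClosure K)).toAffine.b₄ = b := ⟨_, rfl⟩
  obtain ⟨B6, hB6⟩ : ∃ b, (W.baseChange (AlgebraicClosure K)).toAffine.b₆ = b := ⟨_, rfl⟩
  obtain ⟨B8, hB8⟩ : ∃ b, (W.baseChange (AlgebraicClosure K)).toAffine.b₈ = b := ⟨_, rfl⟩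
  rw [hB2, hB4, hB6, hB8] at E1 E2 E3 E4
  -- distinctness of the four x-coordinates
  have hx12 : x1 ≠ x := by
    intro hxx
    rcases tt_eq_or_eq_neg h1ns h hxx with hc | hc
    · have hcc : Q' = PP := by rw [hQ'eq, hPPdef]; exact hc
      exact hPQ (AddSubgroup.mem_zmultiples_iff.mpr ⟨1, by rw [one_smul]; exact hcc⟩)
    · have hcc : Q' = -PP := by rw [hQ'eq, hPPdef]; exact hc
      exact hPQ (AddSubgroup.mem_zmultiples_iff.mpr
        ⟨-1, by rw [neg_smul, one_smul, hcc, neg_neg]⟩)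
  have hx23 : x ≠ x3 := by
    intro hxx
    rcases tt_eq_or_eq_neg h h3ns hxx with hc | hc
    · have hcc : PP = S := by rw [hPPdef, hSeq]; exact hc
      rw [hSdef] at hcc
      exact hQ'0 (left_eq_add.mp hcc)
    · have hcc : PP = -S := by rw [hPPdef, hSeq]; exact hc
      rw [hSdef] at hcc
      have h0 := eq_neg_iff_add_eq_zero.mp hcc
      rw [show PP + (PP + Q') = PP + PP + Q' by abel] at h0
      have hpp := eq_neg_of_add_eq_zero_left h0
      exact hPQ (tt_mem_zmultiples h3PZ (k := -1) (by rw [neg_smul, one_smul]; exact hpp))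
  have hx24 : x ≠ x4 := by
    intro hxx
    rcases tt_eq_or_eq_neg h h4ns hxx with hc | hc
    · have hcc : PP = T := by rw [hPPdef, hTeq]; exact hc
      rw [hTdef] at hcc
      exact hQ'0 (sub_eq_self.mp hcc.symm)
    · have hcc : PP = -T := by rw [hPPdef, hTeq]; exact hc
      rw [hTdef] at hcc
      have h0 := eq_neg_iff_add_eq_zero.mp hcc
      rw [show PP + (PP - Q') = PP + PP - Q' by abel] at h0
      have hpp := sub_eq_zero.mp h0
      exact hPQ (tt_mem_zmultiples h3PZ (k := 1) (by rw [one_smul]; exact hpp))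
  have hx13 : x1 ≠ x3 := by
    intro hxx
    rcases tt_eq_or_eq_neg h1ns h3ns hxx with hc | hc
    · have hcc : Q' = S := by rw [hQ'eq, hSeq]; exact hc
      rw [hSdef] at hcc
      exact hP0 (right_eq_add.mp hcc)
    · have hcc : Q' = -S := by rw [hQ'eq, hSeq]; exact hc
      rw [hSdef] at hcc
      have h0 := eq_neg_iff_add_eq_zero.mp hcc
      rw [show Q' + (PP + Q') = PP + (Q' + Q') by abel] at h0
      have hpp := eq_neg_of_add_eq_zero_left h0
      exact hPQ (AddSubgroup.mem_zmultiples_iff.mpr ⟨-2, by rw [hpp]; abel⟩)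
  have hx14 : x1 ≠ x4 := by
    intro hxx
    rcases tt_eq_or_eq_neg h1ns h4ns hxx with hc | hc
    · have hcc : Q' = T := by rw [hQ'eq, hTeq]; exact hc
      rw [hTdef] at hcc
      have hpp := eq_sub_iff_add_eq.mp hcc
      exact hPQ (AddSubgroup.mem_zmultiples_iff.mpr ⟨2, by rw [two_zsmul]; exact hpp⟩)
    · have hcc : Q' = -T := by rw [hQ'eq, hTeq]; exact hc
      rw [hTdef] at hcc
      have h0 := eq_neg_iff_add_eq_zero.mp hcc
      rw [show Q' + (PP - Q') = PP by abel] at h0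
      exact hP0 h0
  have hx34 : x3 ≠ x4 := by
    intro hxx
    rcases tt_eq_or_eq_neg h3ns h4ns hxx with hc | hc
    · have hcc : S = T := by rw [hSeq, hTeq]; exact hc
      rw [hSdef, hTdef, sub_eq_add_neg] at hcc
      have h2 := eq_neg_iff_add_eq_zero.mp (add_left_cancel hcc)
      have h3'' := h3Q'
      rw [show (3 : ℕ) • Q' = Q' + Q' + Q' by abel, h2, zero_add] at h3''
      exact hQ'0 h3''
    · have hcc : S = -T := by rw [hSeq, hTeq]; exact hc
      rw [hSdef, hTdef] at hcc
      have h0 := eq_neg_iff_add_eq_zero.mp hcc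
      rw [show PP + Q' + (PP - Q') = PP + PP by abel] at h0
      have h3'' := h3P
      rw [show (3 : ℕ) • PP = PP + PP + PP by abel, h0, zero_add] at h3''
      exact hP0 h3''
  -- symmetric function relations
  have hG12 : (x1 - x) * (3 * (x1 ^ 3 + x1 ^ 2 * x + x1 * x ^ 2 + x ^ 3)
      + B2 * (x1 ^ 2 + x1 * x + x ^ 2) + 3 * B4 * (x1 + x) + 3 * B6) = 0 := by
    linear_combination E1 - E2
  have hq12 := (mul_eq_zero.mp hG12).resolve_left (sub_ne_zero.mpr hx12)
  have hG13 : (x1 - x3) * (3 * (x1 ^ 3 + x1 ^ 2 * x3 + x1 * x3 ^ 2 + x3 ^ 3)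
      + B2 * (x1 ^ 2 + x1 * x3 + x3 ^ 2) + 3 * B4 * (x1 + x3) + 3 * B6) = 0 := by
    linear_combination E1 - E3
  have hq13 := (mul_eq_zero.mp hG13).resolve_left (sub_ne_zero.mpr hx13)
  have hG14 : (x1 - x4) * (3 * (x1 ^ 3 + x1 ^ 2 * x4 + x1 * x4 ^ 2 + x4 ^ 3)
      + B2 * (x1 ^ 2 + x1 * x4 + x4 ^ 2) + 3 * B4 * (x1 + x4) + 3 * B6) = 0 := by
    linear_combination E1 - E4
  have hq14 := (mul_eq_zero.mp hG14).resolve_left (sub_ne_zero.mpr hx14)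
  have hH123 : (x - x3) * (3 * (x1 ^ 2 + x ^ 2 + x3 ^ 2 + x1 * x + x1 * x3 + x * x3)
      + B2 * (x1 + x + x3) + 3 * B4) = 0 := by
    linear_combination hq12 - hq13
  have hh123 := (mul_eq_zero.mp hH123).resolve_left (sub_ne_zero.mpr hx23)
  have hH124 : (x - x4) * (3 * (x1 ^ 2 + x ^ 2 + x4 ^ 2 + x1 * x + x1 * x4 + x * x4)
      + B2 * (x1 + x + x4) + 3 * B4) = 0 := by
    linear_combination hq12 - hq14
  have hh124 := (mul_eq_zero.mp hH124).resolve_left (sub_ne_zero.mpr hx24)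
  have hI : (x3 - x4) * (3 * (x1 + x + x3 + x4) + B2) = 0 := by
    linear_combination hh123 - hh124
  have hi := (mul_eq_zero.mp hI).resolve_left (sub_ne_zero.mpr hx34)
  have hb2 : B2 = -3 * (x1 + x + x3 + x4) := by linear_combination hi
  have hb4 : B4 = x1 * x + x1 * x3 + x1 * x4 + x * x3 + x * x4 + x3 * x4 := by
    linear_combination (1/3) * hh123 - ((x1 + x + x3)/3) * hi
  have hb6 : B6 = -(x1 * x * x3 + x1 * x * x4 + x1 * x3 * x4 + x * x3 * x4) := by
    linear_combination (1/3) * hq12 + (-(x1 ^ 2 + x1 * x + x ^ 2)/3) * hb2 + (-(x1 + x)) * hb4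
  have hb8 : B8 = 3 * (x1 * x * x3 * x4) := by
    linear_combination E1 - x1 ^ 3 * hb2 - 3 * x1 ^ 2 * hb4 - 3 * x1 * hb6
  have hrel := (W.baseChange (AlgebraicClosure K)).toAffine.b_relation
  rw [hB2, hB4, hB6, hB8] at hrel
  have hC : 12 * (x1 * x * x3 * x4) - 3 * ((x1 + x + x3 + x4) *
      (x1 * x * x3 + x1 * x * x4 + x1 * x3 * x4 + x * x3 * x4)) +
      (x1 * x + x1 * x3 + x1 * x4 + x * x3 + x * x4 + x3 * x4) ^ 2 = 0 := by
    linear_combination hrel - 4 * hb8 + B2 * hb6 -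
      (x1 * x * x3 + x1 * x * x4 + x1 * x3 * x4 + x * x3 * x4) * hb2 -
      (B4 + (x1 * x + x1 * x3 + x1 * x4 + x * x3 + x * x4 + x3 * x4)) * hb4
  have hKey : 81 * ((x1-x)*(x1-x3)*(x1-x4)*(x-x3)*(x-x4)*(x3-x4)) ^ 2 = -3 * (-27*(x1+x+x3+x4)^2*(x1*x*x3*x4) - 8*(x1*x+x1*x3+x1*x4+x*x3+x*x4+x3*x4)^3 - 27*(x1*x*x3+x1*x*x4+x1*x3*x4+x*x3*x4)^2 + 27*(x1+x+x3+x4)*(x1*x+x1*x3+x1*x4+x*x3+x*x4+x3*x4)*(x1*x*x3+x1*x*x4+x1*x3*x4+x*x3*x4)) ^ 2 := by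
    linear_combination (192*x3^4*x4^4 + 48*x*x3^3*x4^4 + 48*x*x3^4*x4^3 - 180*x^2*x3^2*x4^4 - 108*x^2*x3^3*x4^3 - 180*x^2*x3^4*x4^2 + 48*x^3*x3*x4^4 - 108*x^3*x3^2*x4^3 - 108*x^3*x3^3*x4^2 + 48*x^3*x3^4*x4 + 192*x^4*x4^4 + 48*x^4*x3*x4^3 - 180*x^4*x3^2*x4^2 + 48*x^4*x3^3*x4 + 192*x^4*x3^4 + 48*x1*x3^3*x4^4 + 48*x1*x3^4*x4^3 - 108*x1*x*x3^2*x4^4 + 48*x1*x*x3^3*x4^3 - 108*x1*x*x3^4*x4^2 - 108*x1*x^2*x3*x4^4 + 72*x1*x^2*x3^2*x4^3 + 72*x1*x^2*x3^3*x4^2 - 108*x1*x^2*x3^4*x4 + 48*x1*x^3*x4^4 + 48*x1*x^3*x3*x4^3 + 72*x1*x^3*x3^2*x4^2 + 48*x1*x^3*x3^3*x4 + 48*x1*x^3*x3^4 + 48*x1*x^4*x4^3 - 108*x1*x^4*x3*x4^2 - 108*x1*x^4*x3^2*x4 + 48*x1*x^4*x3^3 - 180*x1^2*x3^2*x4^4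 - 108*x1^2*x3^3*x4^3 - 180*x1^2*x3^4*x4^2 - 108*x1^2*x*x3*x4^4 + 72*x1^2*x*x3^2*x4^3 + 72*x1^2*x*x3^3*x4^2 - 108*x1^2*x*x3^4*x4 - 180*x1^2*x^2*x4^4 + 72*x1^2*x^2*x3*x4^3 + 1296*x1^2*x^2*x3^2*x4^2 + 72*x1^2*x^2*x3^3*x4 - 180*x1^2*x^2*x3^4 - 108*x1^2*x^3*x4^3 + 72*x1^2*x^3*x3*x4^2 + 72*x1^2*x^3*x3^2*x4 - 108*x1^2*x^3*x3^3 - 180*x1^2*x^4*x4^2 - 108*x1^2*x^4*x3*x4 - 180*x1^2*x^4*x3^2 + 48*x1^3*x3*x4^4 - 108*x1^3*x3^2*x4^3 - 108*x1^3*x3^3*x4^2 + 48*x1^3*x3^4*x4 + 48*x1^3*x*x4^4 + 48*x1^3*x*x3*x4^3 + 72*x1^3*x*x3^2*x4^2 + 48*x1^3*x*x3^3*x4 + 48*x1^3*x*x3^4 - 108*x1^3*x^2*x4^3 + 72*x1^3*x^2*x3*x4^2 + 72*x1^3*x^2*x3^2*x4 - 108*x1^3*x^2*x3^3 - 108*x1^3*x^3*x4^2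 + 48*x1^3*x^3*x3*x4 - 108*x1^3*x^3*x3^2 + 48*x1^3*x^4*x4 + 48*x1^3*x^4*x3 + 192*x1^4*x4^4 + 48*x1^4*x3*x4^3 - 180*x1^4*x3^2*x4^2 + 48*x1^4*x3^3*x4 + 192*x1^4*x3^4 + 48*x1^4*x*x4^3 - 108*x1^4*x*x3*x4^2 - 108*x1^4*x*x3^2*x4 + 48*x1^4*x*x3^3 - 180*x1^4*x^2*x4^2 - 108*x1^4*x^2*x3*x4 - 180*x1^4*x^2*x3^2 + 48*x1^4*x^3*x4 + 48*x1^4*x^3*x3 + 192*x1^4*x^4) * hC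
  have hΔdef : (W.baseChange (AlgebraicClosure K)).toAffine.Δ =
      -(W.baseChange (AlgebraicClosure K)).toAffine.b₂ ^ 2 * (W.baseChange (AlgebraicClosure K)).toAffine.b₈
      - 8 * (W.baseChange (AlgebraicClosure K)).toAffine.b₄ ^ 3
      - 27 * (W.baseChange (AlgebraicClosure K)).toAffine.b₆ ^ 2
      + 9 * (W.baseChange (AlgebraicClosure K)).toAffine.b₂ * (W.baseChange (AlgebraicClosure K)).toAffine.b₄ *
        (W.baseChange (AlgebraicClosure K)).toAffine.b₆ := rfl
  rw [hB2, hB4, hB6, hB8] at hΔdef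
  have hΔe : (W.baseChange (AlgebraicClosure K)).toAffine.Δ = (-27*(x1+x+x3+x4)^2*(x1*x*x3*x4) - 8*(x1*x+x1*x3+x1*x4+x*x3+x*x4+x3*x4)^3 - 27*(x1*x*x3+x1*x*x4+x1*x3*x4+x*x3*x4)^2 + 27*(x1+x+x3+x4)*(x1*x+x1*x3+x1*x4+x*x3+x*x4+x3*x4)*(x1*x*x3+x1*x*x4+x1*x3*x4+x*x3*x4)) := by
    rw [hΔdef, hb2, hb4, hb6, hb8]; ring
  have hΔmap : (W.baseChange (AlgebraicClosure K)).toAffine.Δ = algebraMap K (AlgebraicClosure K) W.Δ := W.map_Δ _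
  have hKey2 : 81 * ((x1-x)*(x1-x3)*(x1-x4)*(x-x3)*(x-x4)*(x3-x4)) ^ 2 = -3 * (algebraMap K (AlgebraicClosure K) W.Δ) ^ 2 := by
    rw [hKey, ← hΔe, hΔmap]
  have hCZ : CharZero (AlgebraicClosure K) := charZero_of_injective_algebraMap (algebraMap K (AlgebraicClosure K)).injective
  have hDne : ((x1-x)*(x1-x3)*(x1-x4)*(x-x3)*(x-x4)*(x3-x4)) ≠ 0 :=
    mul_ne_zero (mul_ne_zero (mul_ne_zero (mul_ne_zero (mul_ne_zero
      (sub_ne_zero.mpr hx12) (sub_ne_zero.mpr hx13)) (sub_ne_zero.mpr hx14))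
      (sub_ne_zero.mpr hx23)) (sub_ne_zero.mpr hx24)) (sub_ne_zero.mpr hx34)
  -- Step 1 : the y-coordinate is rational
  have hy : y ∈ Set.range (algebraMap K (AlgebraicClosure K)) := by
    by_contra hyn
    obtain ⟨x₀, hx₀⟩ := hx
    have hyI : IsIntegral K y := (Algebra.IsAlgebraic.isAlgebraic (R := K) y).isIntegral
    have hysep : IsSeparable K y := (minpoly.irreducible hyI).separable
    have hyb : y ∉ (⊥ : Subalgebra K (AlgebraicClosure K)) := by rwa [Algebra.mem_bot]
    obtain ⟨y', hyy', hconj⟩ :=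
      (notMem_iff_exists_ne_and_isConjRoot hysep (IsAlgClosed.splits _)).mp hyb
    obtain ⟨σ0, hσ0⟩ := hconj.exists_algEquiv
    set σ := σ0.symm with hσdef
    have hσy : σ y = y' := by rw [hσdef, ← hσ0, AlgEquiv.symm_apply_apply]
    have hσyne : σ.toAlgHom y ≠ y := by
      show σ y ≠ y
      rw [hσy]; exact hyy'.symm
    have hσx : σ.toAlgHom x = x := by
      show σ x = x
      rw [← hx₀]; exact σ.commutes x₀
    have hσPeq : Point.map (W' := W) σ.toAlgHom PP =
        Point.some _ _ ((W.toAffine.baseChange_nonsingular σ.toAlgHom.injective x y).mpr h) := by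
      rw [hPPdef, Point.map_some]
    have hσP : Point.map (W' := W) σ.toAlgHom PP = -PP := by
      rcases tt_eq_or_eq_neg ((W.toAffine.baseChange_nonsingular σ.toAlgHom.injective x y).mpr h) h
          hσx with hc | hc
      · exact absurd (Point.some.inj hc).right hσyne
      · rw [hσPeq, hc, ← hPPdef]
    have hσQ : Point.map (W' := W) σ.toAlgHom Q' = Q' := by
      rw [hQ'def, Point.map_map, show σ.toAlgHom.comp f = f from Subsingleton.elim _ _]
    have hσS : Point.map (W' := W) σ.toAlgHom S = -T := by
      rw [hSdef, (Point.map (W' := W) σ.toAlgHom).map_add, hσP, hσQ, hTdef]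
      abel
    have hσT : Point.map (W' := W) σ.toAlgHom T = -S := by
      rw [hTdef, (Point.map (W' := W) σ.toAlgHom).map_sub, hσP, hσQ, hSdef]
      abel
    have hσSeq : Point.map (W' := W) σ.toAlgHom S =
        Point.some _ _ ((W.toAffine.baseChange_nonsingular σ.toAlgHom.injective x3 y3).mpr h3ns) := by
      rw [hSeq, Point.map_some]
    have hσTeq : Point.map (W' := W) σ.toAlgHom T =
        Point.some _ _ ((W.toAffine.baseChange_nonsingular σ.toAlgHom.injective x4 y4).mpr h4ns) := by
      rw [hTeq, Point.map_some]
    have hTneg : -T = Point.some _ _ ((nonsingular_neg ..).mpr h4ns) := by rw [hTeq, Point.neg_some]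
    have hSneg : -S = Point.some _ _ ((nonsingular_neg ..).mpr h3ns) := by rw [hSeq, Point.neg_some]
    have hσx3 : σ.toAlgHom x3 = x4 := (Point.some.inj (hσSeq.symm.trans (hσS.trans hTneg))).left
    have hσx4 : σ.toAlgHom x4 = x3 := (Point.some.inj (hσTeq.symm.trans (hσT.trans hSneg))).left
    have hσx1 : σ.toAlgHom x1 = x1 := by
      rw [hx1y1.1, hfdef]
      show σ (Algebra.ofId K (AlgebraicClosure K) xQ) = Algebra.ofId K (AlgebraicClosure K) xQ
      rw [Algebra.ofId_apply]
      exact σ.commutes xQ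
    have hσD : σ.toAlgHom ((x1-x)*(x1-x3)*(x1-x4)*(x-x3)*(x-x4)*(x3-x4)) = -((x1-x)*(x1-x3)*(x1-x4)*(x-x3)*(x-x4)*(x3-x4)) := by
      simp only [map_mul, map_sub, hσx1, hσx, hσx3, hσx4]
      ring
    have hsK : ((2 * ζ + 1) * W.Δ) ^ 2 = -3 * W.Δ ^ 2 := by
      linear_combination (4 * W.Δ ^ 2) * hz
    have hc2 : (algebraMap K (AlgebraicClosure K) ((2 * ζ + 1) * W.Δ)) ^ 2 =
        -3 * (algebraMap K (AlgebraicClosure K) W.Δ) ^ 2 := by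
      have hmap := congrArg (algebraMap K (AlgebraicClosure K)) hsK
      rw [← map_pow, hmap, map_mul, map_neg, map_ofNat, map_pow]
    have hfact : (9 * ((x1-x)*(x1-x3)*(x1-x4)*(x-x3)*(x-x4)*(x3-x4)) - algebraMap K (AlgebraicClosure K) ((2 * ζ + 1) * W.Δ)) *
        (9 * ((x1-x)*(x1-x3)*(x1-x4)*(x-x3)*(x-x4)*(x3-x4)) + algebraMap K (AlgebraicClosure K) ((2 * ζ + 1) * W.Δ)) = 0 := by
      linear_combination hKey2 - hc2
    have h18 : (18 : AlgebraicClosure K) ≠ 0 := by norm_num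
    rcases mul_eq_zero.mp hfact with hcase | hcase
    · have h1 := sub_eq_zero.mp hcase
      have h2 := congrArg σ.toAlgHom h1
      rw [map_mul, map_ofNat, hσD, AlgHom.commutes] at h2
      have h3' : (18 : AlgebraicClosure K) * ((x1-x)*(x1-x3)*(x1-x4)*(x-x3)*(x-x4)*(x3-x4)) = 0 := by linear_combination h1 - h2
      exact hDne ((mul_eq_zero.mp h3').resolve_left h18)
    · have h1 := eq_neg_of_add_eq_zero_left hcase
      have h2 := congrArg σ.toAlgHom h1
      rw [map_mul, map_ofNat, hσD, map_neg, AlgHom.commutes] at h2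
      have h3' : (18 : AlgebraicClosure K) * ((x1-x)*(x1-x3)*(x1-x4)*(x-x3)*(x-x4)*(x3-x4)) = 0 := by linear_combination h1 - h2
      exact hDne ((mul_eq_zero.mp h3').resolve_left h18)
  refine ⟨hy, ?_⟩
  -- Step 2 : all of the 3-torsion is rational
  obtain ⟨x₀, hx₀⟩ := hx
  obtain ⟨y₀, hy₀⟩ := hy
  have hfx₀ : f x₀ = x := by rw [hfdef]; exact hx₀
  have hfy₀ : f y₀ = y := by rw [hfdef]; exact hy₀
  have h₀K : (W.baseChange K).toAffine.Nonsingular x₀ y₀ :=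
    (W.toAffine.baseChange_nonsingular f.injective x₀ y₀).mp (by rw [hfx₀, hfy₀]; exact h)
  have hmapP : Point.map (W' := W) f (Point.some _ _ h₀K) = PP := by
    rw [Point.map_some, hPPdef]
    exact tt_some_eq _ _ hfx₀ hfy₀
  have hSmap : Point.map (W' := W) f (Point.some _ _ h₀K + Q) = S := by
    rw [(Point.map (W' := W) f).map_add, hmapP, ← hQ'def, ← hSdef]
  have hTmap : Point.map (W' := W) f (Point.some _ _ h₀K - Q) = T := by
    rw [(Point.map (W' := W) f).map_sub, hmapP, ← hQ'def, ← hTdef]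
  intro R h3R
  rcases eq_or_ne R 0 with rfl | hR0
  · exact ⟨0, (Point.map (W' := W) f).map_zero⟩
  obtain ⟨xR, yR, hRns, hReq⟩ := tt_point_cases R hR0
  have ER := tt_psi3_root hRns (by rw [← hReq]; exact h3R)
  rw [hB2, hB4, hB6, hB8] at ER
  have hfacR : 3 * ((xR - x1) * (xR - x) * (xR - x3) * (xR - x4)) = 0 := by
    linear_combination ER - xR ^ 3 * hb2 - 3 * xR ^ 2 * hb4 - 3 * xR * hb6 - hb8
  have h3ne : (3 : AlgebraicClosure K) ≠ 0 := by norm_num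
  have hprod := (mul_eq_zero.mp hfacR).resolve_left h3ne
  rcases mul_eq_zero.mp hprod with h' | h4x
  · rcases mul_eq_zero.mp h' with h'' | h3x
    · rcases mul_eq_zero.mp h'' with h1x | h2x
      · have hxr := sub_eq_zero.mp h1x
        rcases tt_eq_or_eq_neg hRns h1ns hxr with hc | hc
        · have hcc : R = Q' := by rw [hReq, hQ'eq]; exact hc
          exact ⟨Q, by rw [← hQ'def]; exact hcc.symm⟩
        · have hcc : R = -Q' := by rw [hReq, hQ'eq]; exact hc
          exact ⟨-Q, by rw [(Point.map (W' := W) f).map_neg, ← hQ'def]; exact hcc.symm⟩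
      · have hxr := sub_eq_zero.mp h2x
        rcases tt_eq_or_eq_neg hRns h hxr with hc | hc
        · have hcc : R = PP := by rw [hReq, hPPdef]; exact hc
          exact ⟨Point.some _ _ h₀K, by rw [hmapP]; exact hcc.symm⟩
        · have hcc : R = -PP := by rw [hReq, hPPdef]; exact hc
          exact ⟨-Point.some _ _ h₀K, by rw [(Point.map (W' := W) f).map_neg, hmapP]; exact hcc.symm⟩
    · have hxr := sub_eq_zero.mp h3x
      rcases tt_eq_or_eq_neg hRns h3ns hxr with hc | hc
      · have hcc : R = S := by rw [hReq, hSeq]; exact hc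
        exact ⟨Point.some _ _ h₀K + Q, by rw [hSmap]; exact hcc.symm⟩
      · have hcc : R = -S := by rw [hReq, hSeq]; exact hc
        exact ⟨-(Point.some _ _ h₀K + Q), by rw [(Point.map (W' := W) f).map_neg, hSmap]; exact hcc.symm⟩
  · have hxr := sub_eq_zero.mp h4x
    rcases tt_eq_or_eq_neg hRns h4ns hxr with hc | hc
    · have hcc : R = T := by rw [hReq, hTeq]; exact hc
      exact ⟨Point.some _ _ h₀K - Q, by rw [hTmap]; exact hcc.symm⟩
    · have hcc : R = -T := by rw [hReq, hTeq]; exact hc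
      exact ⟨-(Point.some _ _ h₀K - Q), by rw [(Point.map (W' := W) f).map_neg, hTmap]; exact hcc.symm⟩
end

section
/- The rational points of the elliptic curve y² = x³ − x² + x (the modular curve X₁(2,12), 24A4 in Cremona's tables) form a group isomorphic to ℤ/4ℤ. -/
open WeierstrassCurve

section ArithmeticLemmas

-- helper: compare natAbs via squares
lemma natAbs_lt_of_sq_lt {a b : ℤ} (h : a^2 < b^2) : a.natAbs < b.natAbs := by
  have ha : (a.natAbs : ℤ)^2 = a^2 := by
    push_cast [Int.natAbs_sq]; exact sq_abs _
  have hb : (b.natAbs : ℤ)^2 = b^2 := by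
    push_cast [Int.natAbs_sq]; exact sq_abs _
  by_contra hle
  push_neg at hle
  have h2 : (b.natAbs : ℤ) ≤ (a.natAbs : ℤ) := by exact_mod_cast hle
  nlinarith [ha, hb, Int.ofNat_nonneg a.natAbs, Int.ofNat_nonneg b.natAbs]

lemma one_le_sq {a : ℤ} (h : a ≠ 0) : 1 ≤ a^2 := by
  have h0 : 0 < a^2 := lt_of_le_of_ne (sq_nonneg a) (Ne.symm (pow_ne_zero 2 h))
  omega

-- 3 does not divide x^2+y^2 for coprime x y
lemma three_not_dvd_sq_add_sq {x y : ℤ} (h : IsCoprime x y) : ¬ (3 ∣ x^2 + y^2) := by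
  intro hdvd
  have h3 : ((x^2 + y^2 : ℤ) : ZMod 3) = 0 := by
    exact_mod_cast (ZMod.intCast_zmod_eq_zero_iff_dvd _ 3).mpr hdvd
  push_cast at h3
  have key : ∀ a b : ZMod 3, a^2 + b^2 = 0 → a = 0 ∧ b = 0 := by decide
  obtain ⟨hx0, hy0⟩ := key _ _ h3
  have hx : (3:ℤ) ∣ x := by exact_mod_cast (ZMod.intCast_zmod_eq_zero_iff_dvd x 3).mp hx0
  have hy : (3:ℤ) ∣ y := by exact_mod_cast (ZMod.intCast_zmod_eq_zero_iff_dvd y 3).mp hy0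
  have := h.isUnit_of_dvd' hx hy
  rw [Int.isUnit_iff] at this
  omega

-- CROSS lemma
lemma cross_lemma {x y c₁ c₂ : ℤ} (hxy : IsCoprime x y) (hc : IsCoprime c₁ c₂)
    (h : x^2 * (c₁^2 + 4*c₂^2) = y^2 * (c₁^2 + c₂^2)) :
    c₁^2 + 4*c₂^2 = y^2 ∧ c₁^2 + c₂^2 = x^2 := by
  have hx0 : x ≠ 0 := by
    rintro rfl
    have hA : c₁^2 + c₂^2 ≠ 0 := by
      intro h0
      have h1 : c₁ = 0 ∧ c₂ = 0 := by constructor <;> nlinarith [sq_nonneg c₁, sq_nonneg c₂]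
      obtain ⟨rfl, rfl⟩ := h1
      exact (hc.isUnit_of_dvd' dvd_rfl dvd_rfl).ne_zero rfl |>.elim -- coprime 0 0 false
    have hy0 : y = 0 := by
      rcases mul_eq_zero.mp (by linarith [h] : y^2 * (c₁^2+c₂^2) = 0) with h' | h'
      · exact pow_eq_zero_iff (by norm_num) |>.mp h'
      · exact absurd h' hA
    subst hy0
    have := hxy.isUnit_of_dvd' dvd_rfl dvd_rfl
    rw [Int.isUnit_iff] at this; omega
  have hy0 : y ≠ 0 := by
    rintro rfl
    have hA : c₁^2 + 4*c₂^2 ≠ 0 := by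
      intro h0
      have h1 : c₁ = 0 ∧ c₂ = 0 := by constructor <;> nlinarith [sq_nonneg c₁, sq_nonneg c₂]
      obtain ⟨rfl, rfl⟩ := h1
      exact (hc.isUnit_of_dvd' dvd_rfl dvd_rfl).ne_zero rfl |>.elim
    rcases mul_eq_zero.mp (by linarith [h] : x^2 * (c₁^2+4*c₂^2) = 0) with h' | h'
    · exact hx0 (pow_eq_zero_iff (by norm_num) |>.mp h')
    · exact hA h'
  -- y^2 ∣ A
  have hco2 : IsCoprime (y^2) (x^2) := (hxy.symm.pow : IsCoprime (y^2) (x^2))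
  have hdvdA : y^2 ∣ c₁^2 + 4*c₂^2 := by
    have : y^2 ∣ x^2 * (c₁^2 + 4*c₂^2) := ⟨c₁^2+c₂^2, by linarith [h]⟩
    exact hco2.dvd_of_dvd_mul_left this
  obtain ⟨k, hk⟩ := hdvdA
  have hB : c₁^2 + c₂^2 = x^2 * k := by
    have h2 : x^2 * (y^2 * k) = y^2 * (c₁^2 + c₂^2) := by rw [← hk]; exact h
    have : y^2 * (x^2 * k) = y^2 * (c₁^2+c₂^2) := by ring_nf; ring_nf at h2; linarith
    exact (mul_left_cancel₀ (pow_ne_zero 2 hy0) this).symm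
  -- k ∣ 3
  have hk3 : k ∣ 3 := by
    obtain ⟨u, v, huv⟩ := (hc.pow : IsCoprime (c₁^2) (c₂^2))
    have d1 : k ∣ 3*c₂^2 := ⟨y^2 - x^2, by nlinarith [hk, hB]⟩
    have d2 : k ∣ 3*c₁^2 := ⟨4*x^2 - y^2, by nlinarith [hk, hB]⟩
    have : 3 = u * (3*c₁^2) + v * (3*c₂^2) := by linear_combination 3 * huv.symm
    rw [this]
    exact dvd_add (Dvd.dvd.mul_left d2 u) (Dvd.dvd.mul_left d1 v)
  have hkpos : 0 < k := by
    have hApos : 0 < c₁^2 + 4*c₂^2 := by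
      rcases lt_or_eq_of_le (by positivity : (0:ℤ) ≤ c₁^2 + 4*c₂^2) with h' | h'
      · exact h'
      · exfalso
        have h1 : c₁ = 0 ∧ c₂ = 0 := by constructor <;> nlinarith [sq_nonneg c₁, sq_nonneg c₂]
        obtain ⟨rfl, rfl⟩ := h1
        exact (hc.isUnit_of_dvd' dvd_rfl dvd_rfl).ne_zero rfl
    nlinarith [hk, pow_pos (abs_pos.mpr hy0) 2, sq_nonneg y]
  have hkne3 : k ≠ 3 := by
    rintro rfl
    exact three_not_dvd_sq_add_sq hc ⟨x^2, by linarith [hB]⟩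
  have hkle : k ≤ 3 := Int.le_of_dvd (by norm_num) hk3
  have hk1 : k = 1 := by
    interval_cases k
    · rfl
    · exfalso; omega
    · exact absurd rfl hkne3
  subst hk1
  exact ⟨by linarith [hk], by linarith [hB]⟩

-- SPLIT lemma: factor a product equality between two coprime pairs
lemma split_lemma {A B m n : ℤ} (hAB : IsCoprime A B) (hmn : IsCoprime m n) (hA : A ≠ 0)
    (h : A * B = m * n) :
    ∃ d₁ d₂ d₃ d₄ : ℤ, m = d₁*d₂ ∧ n = d₃*d₄ ∧ A = d₁*d₃ ∧ B = d₂*d₄ ∧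
      IsCoprime d₁ d₄ ∧ IsCoprime d₂ d₃ := by
  let g : ℤ := (Int.gcd A m : ℤ)
  have hgpos : 0 < Int.gcd A m := by
    rcases Nat.eq_zero_or_pos (Int.gcd A m) with h0 | h0
    · exact absurd (Int.natAbs_eq_zero.mp (Nat.eq_zero_of_gcd_eq_zero_left h0)) hA
    · exact h0
  have hgne : g ≠ 0 := by positivity
  obtain ⟨A₁, hA₁⟩ : g ∣ A := Int.gcd_dvd_left A m
  obtain ⟨m₁, hm₁⟩ : g ∣ m := Int.gcd_dvd_right A m
  have hcoA₁m₁ : IsCoprime A₁ m₁ := by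
    rw [Int.isCoprime_iff_gcd_eq_one]
    have h1 : A / g = A₁ := by rw [hA₁]; exact Int.mul_ediv_cancel_left _ hgne
    have h2 : m / g = m₁ := by rw [hm₁]; exact Int.mul_ediv_cancel_left _ hgne
    have h3 := Int.gcd_div_gcd_div_gcd (i := A) (j := m) hgpos
    rwa [h1, h2] at h3
  have hA₁ne : A₁ ≠ 0 := by rintro rfl; simp at hA₁; exact hA hA₁
  have heq1 : A₁ * B = m₁ * n := by
    have h' : g * (A₁ * B) = g * (m₁ * n) := by
      rw [hA₁, hm₁] at h; linear_combination h
    exact mul_left_cancel₀ hgne h'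
  have hdvd : A₁ ∣ n := by
    refine (hcoA₁m₁).dvd_of_dvd_mul_left ⟨B, by linarith [heq1]⟩
  obtain ⟨n₁, hn₁⟩ := hdvd
  have hB : B = m₁ * n₁ := by
    have : A₁ * B = A₁ * (m₁ * n₁) := by rw [heq1, hn₁]; ring
    exact mul_left_cancel₀ hA₁ne this
  refine ⟨g, m₁, A₁, n₁, hm₁, hn₁, hA₁, hB, ?_, hcoA₁m₁.symm.symm.symm⟩
  · exact hAB.of_isCoprime_of_dvd_left ⟨A₁, by linarith [hA₁]⟩ |>.of_isCoprime_of_dvd_right ⟨m₁, by linarith [hB]⟩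

-- no square is 2 mod 4
lemma no_sq_two_mod_four : ∀ a b c : ZMod 4, (2*a+1)^2 + (2*b+1)^2 ≠ c^2 := by decide

/-- Workhorse: if X²+Y² and X²+4Y² are both squares with X, Y coprime, then XY = 0. -/
lemma lemS : ∀ (N : ℕ) (X Y q r : ℤ), q.natAbs ≤ N → IsCoprime X Y →
    X^2 + Y^2 = q^2 → X^2 + 4*Y^2 = r^2 → X*Y = 0 := by
  intro N
  induction N using Nat.strong_induction_on with
  | _ N ih =>
  intro X Y q r hN hco hq hr
  by_cases hX0 : X = 0
  · rw [hX0, zero_mul]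
  by_cases hY0 : Y = 0
  · rw [hY0, mul_zero]
  exfalso
  rcases Int.even_or_odd X with hXe | hXo
  · -- X even : halve and swap
    obtain ⟨X', hX'⟩ := hXe
    have hXX : X = 2*X' := by omega
    have hre : Even (r^2) := ⟨2*X'^2 + 2*Y^2, by linear_combination -hr + (X+2*X')*hXX⟩
    have hrev : Even r := (Int.even_pow.mp hre).1
    obtain ⟨r', hr'⟩ := hrev
    have hrr : r = 2*r' := by omega
    have hco' : IsCoprime Y X' := hco.symm.of_isCoprime_of_dvd_right ⟨2, by linarith [hXX]⟩
    have e1 : Y^2 + X'^2 = r'^2 := by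
      have h4 : 4*(Y^2 + X'^2) = 4*r'^2 := by linear_combination hr - (X+2*X')*hXX + (r+2*r')*hrr
      linarith [h4]
    have e2 : Y^2 + 4*X'^2 = q^2 := by linear_combination hq - (X+2*X')*hXX
    have hlt : r'.natAbs < q.natAbs := by
      apply natAbs_lt_of_sq_lt
      have hx2 : 0 < X^2 := by positivity
      nlinarith [e1, e2, sq_nonneg Y]
    have h0 := ih r'.natAbs (lt_of_lt_of_le hlt hN) Y X' r' q (le_refl _) hco' e1 e2
    have : X' = 0 := by
      rcases mul_eq_zero.mp h0 with h' | h'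
      · exact absurd h' hY0
      · exact h'
    exact hX0 (by omega)
  · -- X odd
    have hYe : Even Y := by
      rcases Int.even_or_odd Y with h' | h'
      · exact h'
      · exfalso
        obtain ⟨k, hk⟩ := hXo
        obtain ⟨l, hl⟩ := h'
        have hc : ((2*(k:ZMod 4)+1)^2 + (2*(l:ZMod 4)+1)^2 = ((q:ZMod 4))^2) := by
          have := congrArg (fun t : ℤ => (t : ZMod 4)) hq
          push_cast at this
          rw [hk, hl] at this
          push_cast at this
          linear_combination this
        exact no_sq_two_mod_four _ _ _ hc
    -- triple 1 : X² + Y² = q²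
    have pt1 : PythagoreanTriple X Y q := by
      show X*X + Y*Y = q*q
      linear_combination hq
    obtain ⟨m, n, hmn1, _, hmn3, _⟩ :=
      PythagoreanTriple.coprime_classification.mp ⟨pt1, Int.isCoprime_iff_gcd_eq_one.mp hco⟩
    rcases hmn1 with ⟨hXm, hYm⟩ | ⟨hXm, hYm⟩
    swap
    · exfalso
      have : Even X := ⟨m*n, by linarith [hXm]⟩
      exact (Int.not_odd_iff_even.mpr this) hXo
    -- triple 2 : X² + (2Y)² = r²
    have hX2 : IsCoprime X (2:ℤ) := by
      obtain ⟨k, hk⟩ := hXo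
      exact ⟨1, -k, by linarith⟩
    have hco2 : IsCoprime X (2*Y) := hX2.mul_right hco
    have pt2 : PythagoreanTriple X (2*Y) r := by
      show X*X + (2*Y)*(2*Y) = r*r
      linear_combination hr
    obtain ⟨M, N, hMN1, _, hMN3, hMN4⟩ :=
      PythagoreanTriple.coprime_classification.mp ⟨pt2, Int.isCoprime_iff_gcd_eq_one.mp hco2⟩
    rcases hMN1 with ⟨hXM, hYM⟩ | ⟨hXM, hYM⟩
    swap
    · exfalso
      have : Even X := ⟨M*N, by linarith [hXM]⟩
      exact (Int.not_odd_iff_even.mpr this) hXo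
    have hMn0 : M ≠ 0 := by
      rintro rfl
      simp at hYM
      omega
    have hNn0 : N ≠ 0 := by
      rintro rfl
      simp at hYM
      omega
    have hMNco : IsCoprime M N := Int.isCoprime_iff_gcd_eq_one.mpr hMN3
    have hmnco : IsCoprime m n := Int.isCoprime_iff_gcd_eq_one.mpr hmn3
    have hr2 : r^2 = (M^2+N^2)^2 := by
      linear_combination -hr + (X + (M^2-N^2))*hXM + 2*(Y + M*N)*hYM
    have hr4q : r^2 ≤ 4*q^2 := by nlinarith [hq, hr, sq_nonneg X]
    rcases hMN4 with ⟨hMe, hNo⟩ | ⟨hMo, hNe⟩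
    · -- M even : M = 2 M₁, N odd
      obtain ⟨M₁, hM₁⟩ : (2:ℤ) ∣ M := by omega
      have hprod : N * M₁ = m * n := by
        have h4 : 4*(N*M₁) = 4*(m*n) := by linear_combination -hYM - 2*N*hM₁ + 2*hYm
        linarith [h4]
      have hNM₁co : IsCoprime N M₁ := hMNco.symm.of_isCoprime_of_dvd_right ⟨2, by linarith [hM₁]⟩
      obtain ⟨d₁, d₂, d₃, d₄, hd1, hd2, hd3, hd4, hc14, hc23⟩ :=
        split_lemma hNM₁co hmnco hNn0 hprod
      -- m = d₁d₂, n = d₃d₄, N = d₁d₃, M₁ = d₂d₄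
      have hM2 : M^2 = 4*(d₂*d₄)^2 := by rw [hM₁, hd4]; ring
      have hN2 : N^2 = (d₁*d₃)^2 := by rw [hd3]
      have e : (d₁*d₂)^2 - (d₃*d₄)^2 = M^2 - N^2 := by
        rw [← hd1, ← hd2, ← hXm, ← hXM]
      have hkey : d₄^2*(d₃^2 + 4*d₂^2) = d₁^2*(d₃^2+d₂^2) := by
        linear_combination -e - hM2 + hN2
      obtain ⟨cA, cB⟩ := cross_lemma hc14.symm hc23.symm hkey
      -- cA : d₃² + 4 d₂² = d₁², cB : d₃² + d₂² = d₄²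
      have hd₃n0 : d₃ ≠ 0 := by rintro rfl; simp at hd3; exact hNn0 hd3
      have hd₂n0 : d₂ ≠ 0 := by
        rintro rfl
        apply hMn0
        rw [hM₁, hd4]; ring
      have hlt : d₄.natAbs < q.natAbs := by
        apply natAbs_lt_of_sq_lt
        have h1d2 : 1 ≤ d₂^2 := one_le_sq hd₂n0
        have h1d4 : 1 ≤ d₄^2 := by
          apply one_le_sq
          rintro rfl
          apply hMn0; rw [hM₁, hd4]; ring
        have hM2' : M^2 = 4*(d₂^2*d₄^2) := by rw [hM₁, hd4]; ring
        have hmul : 1*d₄^2 ≤ d₂^2*d₄^2 := mul_le_mul_of_nonneg_right h1d2 (sq_nonneg d₄)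
        have hMN2 : 4*d₄^2 ≤ M^2 + N^2 := by
          have := sq_nonneg N
          linarith [hM2', hmul]
        have hsq : (4*d₄^2)^2 ≤ (M^2+N^2)^2 := pow_le_pow_left₀ (by positivity) hMN2 2
        have hsq' : 16*((d₄^2)*(d₄^2)) ≤ (M^2+N^2)^2 := by linear_combination hsq
        have h16 : 16*((d₄^2)*(d₄^2)) ≤ 4*q^2 := by
          have h' : (M^2+N^2)^2 ≤ 4*q^2 := by linarith [hr2, hr4q]
          linarith [hsq', h']
        have h17 : 1*d₄^2 ≤ (d₄^2)*(d₄^2) := mul_le_mul_of_nonneg_right h1d4 (sq_nonneg d₄)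
        linarith [h16, h17, h1d4]
      have h0 := ih d₄.natAbs (lt_of_lt_of_le hlt hN) d₃ d₂ d₄ d₁ (le_refl _) hc23.symm
        (by linarith [cB]) (by linarith [cA])
      rcases mul_eq_zero.mp h0 with h' | h'
      · exact hd₃n0 h'
      · exact hd₂n0 h'
    · -- N even : N = 2 N₁, M odd
      obtain ⟨N₁, hN₁⟩ : (2:ℤ) ∣ N := by omega
      have hprod : M * N₁ = m * n := by
        have h4 : 4*(M*N₁) = 4*(m*n) := by linear_combination -hYM - 2*M*hN₁ + 2*hYm
        linarith [h4]
      have hMN₁co : IsCoprime M N₁ := hMNco.of_isCoprime_of_dvd_right ⟨2, by linarith [hN₁]⟩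
      obtain ⟨d₁, d₂, d₃, d₄, hd1, hd2, hd3, hd4, hc14, hc23⟩ :=
        split_lemma hMN₁co hmnco hMn0 hprod
      -- m = d₁d₂, n = d₃d₄, M = d₁d₃, N₁ = d₂d₄
      have hN2 : N^2 = 4*(d₂*d₄)^2 := by rw [hN₁, hd4]; ring
      have hM2 : M^2 = (d₁*d₃)^2 := by rw [hd3]
      have e : (d₁*d₂)^2 - (d₃*d₄)^2 = M^2 - N^2 := by
        rw [← hd1, ← hd2, ← hXm, ← hXM]
      have hkey : d₂^2*(d₁^2 + 4*d₄^2) = d₃^2*(d₁^2+d₄^2) := by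
        linear_combination e - hN2 + hM2
      obtain ⟨cA, cB⟩ := cross_lemma hc23 hc14 hkey
      -- cA : d₁² + 4 d₄² = d₃², cB : d₁² + d₄² = d₂²
      have hd₁n0 : d₁ ≠ 0 := by rintro rfl; simp at hd3; exact hMn0 hd3
      have hd₄n0 : d₄ ≠ 0 := by
        rintro rfl
        apply hNn0
        rw [hN₁, hd4]; ring
      have hlt : d₂.natAbs < q.natAbs := by
        apply natAbs_lt_of_sq_lt
        have h1d4 : 1 ≤ d₄^2 := one_le_sq hd₄n0
        have h1d2 : 1 ≤ d₂^2 := by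
          apply one_le_sq
          rintro rfl
          apply hNn0; rw [hN₁, hd4]; ring
        have hN2' : N^2 = 4*(d₂^2*d₄^2) := by rw [hN₁, hd4]; ring
        have hmul : 1*d₂^2 ≤ d₄^2*d₂^2 := mul_le_mul_of_nonneg_right h1d4 (sq_nonneg d₂)
        have hMN2 : 4*d₂^2 ≤ M^2 + N^2 := by
          have := sq_nonneg M
          have hcomm : d₄^2*d₂^2 = d₂^2*d₄^2 := by ring
          linarith [hN2', hmul, hcomm]
        have hsq : (4*d₂^2)^2 ≤ (M^2+N^2)^2 := pow_le_pow_left₀ (by positivity) hMN2 2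
        have hsq' : 16*((d₂^2)*(d₂^2)) ≤ (M^2+N^2)^2 := by linear_combination hsq
        have h16 : 16*((d₂^2)*(d₂^2)) ≤ 4*q^2 := by
          have h' : (M^2+N^2)^2 ≤ 4*q^2 := by linarith [hr2, hr4q]
          linarith [hsq', h']
        have h17 : 1*d₂^2 ≤ (d₂^2)*(d₂^2) := mul_le_mul_of_nonneg_right h1d2 (sq_nonneg d₂)
        linarith [h16, h17, h1d2]
      have h0 := ih d₂.natAbs (lt_of_lt_of_le hlt hN) d₁ d₄ d₂ d₃ (le_refl _) hc14
        (by linarith [cB]) (by linarith [cA])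
      rcases mul_eq_zero.mp h0 with h' | h'
      · exact hd₁n0 h'
      · exact hd₄n0 h'

lemma odd_coprime_two {X : ℤ} (h : X % 2 = 1) : IsCoprime X (2:ℤ) := by
  obtain ⟨j, hj⟩ : ∃ j, X = 2*j+1 := ⟨(X-1)/2, by omega⟩
  exact ⟨1, -j, by linarith⟩

/-- Mixed-parity case of the quartic: a even, b odd forces a = 0. -/
lemma main_mixed {a b c : ℤ} (hco : IsCoprime a b) (ha : a % 2 = 0) (hb : b % 2 = 1)
    (h : a^4 - a^2*b^2 + b^4 = c^2) : a = 0 := by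
  by_contra han
  obtain ⟨α, hα⟩ : ∃ α, a = 2*α := ⟨a/2, by omega⟩
  have hbn0 : b ≠ 0 := by omega
  -- coprimality of the legs
  have hcpa : IsCoprime a (a^2 - b^2) := by
    have h1 : IsCoprime a (-b^2 + a*a) := (hco.pow_right.neg_right).add_mul_left_right a
    rwa [show -b^2 + a*a = a^2 - b^2 by ring] at h1
  have hcpb : IsCoprime b (a^2 - b^2) := by
    have h1 : IsCoprime b (a^2 + b*(-b)) := (hco.symm.pow_right).add_mul_left_right (-b)
    rwa [show a^2 + b*(-b) = a^2 - b^2 by ring] at h1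
  have hlegs : IsCoprime (a^2 - b^2) (a*b) := hcpa.symm.mul_right hcpb.symm
  have pt : PythagoreanTriple (a^2-b^2) (a*b) c := by
    show (a^2-b^2)*(a^2-b^2) + (a*b)*(a*b) = c*c
    linear_combination h
  obtain ⟨m, n, hmn1, _, hmn3, _⟩ :=
    PythagoreanTriple.coprime_classification.mp ⟨pt, Int.isCoprime_iff_gcd_eq_one.mp hlegs⟩
  have hXodd : Odd (a^2 - b^2) := by
    obtain ⟨l, hl⟩ : ∃ l, b = 2*l+1 := ⟨(b-1)/2, by omega⟩
    exact ⟨2*α^2 - 2*l^2 - 2*l - 1, by rw [hα, hl]; ring⟩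
  rcases hmn1 with ⟨hXm, hYm⟩ | ⟨hXm, hYm⟩
  swap
  · exact (Int.not_odd_iff_even.mpr ⟨m*n, by linarith [hXm]⟩) hXodd
  -- a b = 2 m n, a = 2α ⇒ α b = m n
  have hprod : α * b = m * n := by
    have h4 : 2*(α*b) = 2*(m*n) := by linear_combination hYm - b*hα
    linarith [h4]
  have hαb : IsCoprime α b := hco.of_isCoprime_of_dvd_left ⟨2, by linarith [hα]⟩
  have hαn0 : α ≠ 0 := by omega
  have hmnco : IsCoprime m n := Int.isCoprime_iff_gcd_eq_one.mpr hmn3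
  obtain ⟨d₁, d₂, d₃, d₄, hd1, hd2, hd3, hd4, hc14, hc23⟩ :=
    split_lemma hαb hmnco hαn0 hprod
  -- m = d₁d₂, n = d₃d₄, α = d₁d₃, b = d₂d₄
  have hkey : d₃^2*(d₄^2 + 4*d₁^2) = d₂^2*(d₄^2 + d₁^2) := by
    have e : a^2 - b^2 = m^2 - n^2 := hXm
    rw [hα, hd3, hd1, hd2] at e
    rw [hd4] at e
    linear_combination e
  obtain ⟨cA, cB⟩ := cross_lemma hc23.symm hc14.symm hkey
  -- cA : d₄² + 4 d₁² = d₂², cB : d₄² + d₁² = d₃²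
  have h0 := lemS d₃.natAbs d₄ d₁ d₃ d₂ (le_refl _) hc14.symm
    (by linarith [cB]) (by linarith [cA])
  rcases mul_eq_zero.mp h0 with h' | h'
  · apply hbn0; rw [hd4, h']; ring
  · apply hαn0; rw [hd3, h']; ring

/-- Mixed-parity case of the auxiliary quartic W. -/
lemma w_mixed {p q c : ℤ} (hco : IsCoprime p q) (hp : p % 2 = 1) (hq : q % 2 = 0)
    (hpq : p*q ≠ 0) (h : p^4 + 14*p^2*q^2 + q^4 = c^2) : False := by
  have hXodd : Odd (p^2 - q^2) := by
    obtain ⟨k, hk⟩ : ∃ k, p = 2*k+1 := ⟨(p-1)/2, by omega⟩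
    obtain ⟨l, hl⟩ : ∃ l, q = 2*l := ⟨q/2, by omega⟩
    exact ⟨2*k^2 + 2*k - 2*l^2, by rw [hk, hl]; ring⟩
  have hXmod : (p^2 - q^2) % 2 = 1 := Int.odd_iff.mp hXodd
  -- coprimality of the legs
  have hcpa : IsCoprime p (p^2 - q^2) := by
    have h1 : IsCoprime p (-q^2 + p*p) := (hco.pow_right.neg_right).add_mul_left_right p
    rwa [show -q^2 + p*p = p^2 - q^2 by ring] at h1
  have hcpb : IsCoprime q (p^2 - q^2) := by
    have h1 : IsCoprime q (p^2 + q*(-q)) := (hco.symm.pow_right).add_mul_left_right (-q)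
    rwa [show p^2 + q*(-q) = p^2 - q^2 by ring] at h1
  have h2c : IsCoprime (p^2-q^2) (2:ℤ) := odd_coprime_two hXmod
  have hlegs : IsCoprime (p^2 - q^2) (2*(2*(p*q))) :=
    h2c.mul_right (h2c.mul_right (hcpa.symm.mul_right hcpb.symm))
  have pt : PythagoreanTriple (p^2-q^2) (2*(2*(p*q))) c := by
    show (p^2-q^2)*(p^2-q^2) + (2*(2*(p*q)))*(2*(2*(p*q))) = c*c
    linear_combination h
  obtain ⟨m, n, hmn1, _, hmn3, hmn4⟩ :=
    PythagoreanTriple.coprime_classification.mp ⟨pt, Int.isCoprime_iff_gcd_eq_one.mp hlegs⟩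
  rcases hmn1 with ⟨hXm, hYm⟩ | ⟨hXm, hYm⟩
  swap
  · exact (Int.not_odd_iff_even.mpr ⟨m*n, by linarith [hXm]⟩) hXodd
  have hmnco : IsCoprime m n := Int.isCoprime_iff_gcd_eq_one.mpr hmn3
  have hpn0 : p ≠ 0 := fun h' => hpq (by rw [h']; ring)
  have hqn0 : q ≠ 0 := fun h' => hpq (by rw [h']; ring)
  rcases hmn4 with ⟨hme, hno⟩ | ⟨hmo, hne⟩
  · -- m even
    obtain ⟨m₁, hm₁⟩ : ∃ m₁, m = 2*m₁ := ⟨m/2, by omega⟩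
    have hnn0 : n ≠ 0 := by omega
    have hprod : n * m₁ = p * q := by
      have h4 : 4*(n*m₁) = 4*(p*q) := by linear_combination -hYm - 2*n*hm₁
      linarith [h4]
    have hnm₁co : IsCoprime n m₁ :=
      (Int.isCoprime_iff_gcd_eq_one.mpr (Int.gcd_comm m n ▸ hmn3)).of_isCoprime_of_dvd_right
        ⟨2, by linarith [hm₁]⟩
    obtain ⟨d₁, d₂, d₃, d₄, hd1, hd2, hd3, hd4, hc14, hc23⟩ :=
      split_lemma hnm₁co hco hnn0 hprod
    -- p = d₁d₂, q = d₃d₄, n = d₁d₃, m₁ = d₂d₄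
    have hkey : d₄^2*(d₃^2 + 4*d₂^2) = d₁^2*(d₃^2 + d₂^2) := by
      have e : p^2 - q^2 = m^2 - n^2 := hXm
      rw [hm₁, hd1, hd2, hd3, hd4] at e
      linear_combination -e
    obtain ⟨cA, cB⟩ := cross_lemma hc14.symm hc23.symm hkey
    have h0 := lemS d₄.natAbs d₃ d₂ d₄ d₁ (le_refl _) hc23.symm
      (by linarith [cB]) (by linarith [cA])
    rcases mul_eq_zero.mp h0 with h' | h'
    · apply hqn0; rw [hd2, h']; ring
    · apply hpn0; rw [hd1, h']; ring
  · -- n even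
    obtain ⟨n₁, hn₁⟩ : ∃ n₁, n = 2*n₁ := ⟨n/2, by omega⟩
    have hmn0 : m ≠ 0 := by omega
    have hprod : m * n₁ = p * q := by
      have h4 : 4*(m*n₁) = 4*(p*q) := by linear_combination -hYm - 2*m*hn₁
      linarith [h4]
    have hmn₁co : IsCoprime m n₁ := hmnco.of_isCoprime_of_dvd_right ⟨2, by linarith [hn₁]⟩
    obtain ⟨d₁, d₂, d₃, d₄, hd1, hd2, hd3, hd4, hc14, hc23⟩ :=
      split_lemma hmn₁co hco hmn0 hprod
    -- p = d₁d₂, q = d₃d₄, m = d₁d₃, n₁ = d₂d₄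
    have hkey : d₂^2*(d₁^2 + 4*d₄^2) = d₃^2*(d₁^2 + d₄^2) := by
      have e : p^2 - q^2 = m^2 - n^2 := hXm
      rw [hn₁, hd1, hd2, hd3, hd4] at e
      linear_combination e
    obtain ⟨cA, cB⟩ := cross_lemma hc23 hc14 hkey
    have h0 := lemS d₂.natAbs d₁ d₄ d₂ d₃ (le_refl _) hc14
      (by linarith [cB]) (by linarith [cA])
    rcases mul_eq_zero.mp h0 with h' | h'
    · apply hpn0; rw [hd1, h']; ring
    · apply hqn0; rw [hd2, h']; ring

/-- The quartic a⁴ − a²b² + b⁴ = c² has only the trivial coprime solutions. -/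
lemma quartic_main {a b c : ℤ} (hco : IsCoprime a b) (h : a^4 - a^2*b^2 + b^4 = c^2) :
    a = 0 ∨ b = 0 ∨ a^2 = b^2 := by
  rcases Int.emod_two_eq_zero_or_one a with ha | ha <;>
    rcases Int.emod_two_eq_zero_or_one b with hb | hb
  · -- both even : impossible
    exfalso
    have h2a : (2:ℤ) ∣ a := by omega
    have h2b : (2:ℤ) ∣ b := by omega
    have := hco.isUnit_of_dvd' h2a h2b
    rw [Int.isUnit_iff] at this
    omega
  · exact Or.inl (main_mixed hco ha hb h)
  · exact Or.inr (Or.inl (main_mixed (c := c) hco.symm hb ha (by linear_combination h)))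
  · -- both odd
    obtain ⟨p, hp⟩ : ∃ p, a + b = 2*p := ⟨(a+b)/2, by omega⟩
    obtain ⟨q, hq⟩ : ∃ q, a - b = 2*q := ⟨(a-b)/2, by omega⟩
    have ha' : a = p + q := by omega
    have hb' : b = p - q := by omega
    have hWco : IsCoprime p q := by
      obtain ⟨u, v, huv⟩ := hco
      exact ⟨u+v, u-v, by rw [ha', hb'] at huv; linear_combination huv⟩
    have hW : p^4 + 14*p^2*q^2 + q^4 = c^2 := by
      rw [ha', hb'] at h
      linear_combination h
    by_cases hpq : p*q = 0
    · rcases mul_eq_zero.mp hpq with h' | h'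
      · exact Or.inr (Or.inr (by rw [ha', hb', h']; ring))
      · exact Or.inr (Or.inr (by rw [ha', hb', h']; ring))
    · exfalso
      rcases Int.emod_two_eq_zero_or_one p with hpe | hpe <;>
        rcases Int.emod_two_eq_zero_or_one q with hqe | hqe
      · omega
      · exact w_mixed (c := c) hWco.symm hqe hpe (by rw [mul_comm] at hpq; exact hpq)
          (by linear_combination hW)
      · exact w_mixed hWco hpe hqe hpq hW
      · omega

lemma clear_denoms {x y : ℚ} (h : y^2 = x^3 - x^2 + x) :
    (y.num)^2 * (x.den:ℤ)^3 = (x.num^3 - x.num^2*(x.den:ℤ) + x.num*(x.den:ℤ)^2) * (y.den:ℤ)^2 := by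
  have hxd : ((x.den : ℚ)) ≠ 0 := by positivity
  have hyd : ((y.den : ℚ)) ≠ 0 := by positivity
  have h' := h
  rw [← Rat.num_div_den x, ← Rat.num_div_den y] at h'
  field_simp at h'
  have h2 : (((y.num)^2 * (x.den:ℤ)^3 : ℤ) : ℚ) * (x.den:ℚ)^3 =
      (((x.num^3 - x.num^2*(x.den:ℤ) + x.num*(x.den:ℤ)^2) * (y.den:ℤ)^2 : ℤ) : ℚ) * (x.den:ℚ)^3 := by
    push_cast
    linear_combination (x.den:ℚ)^3 * h'
  have h3 := mul_right_cancel₀ (pow_ne_zero 3 hxd) h2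
  exact_mod_cast h3

/-- Classification of rational points on y² = x³ - x² + x. -/
lemma rat_points_classification {x y : ℚ} (h : y^2 = x^3 - x^2 + x) :
    (x = 0 ∧ y = 0) ∨ (x = 1 ∧ y = 1) ∨ (x = 1 ∧ y = -1) := by
  have key := clear_denoms h
  set a : ℤ := x.num with ha_def
  set b : ℤ := (x.den : ℤ) with hb_def
  set u : ℤ := y.num with hu_def
  set w : ℤ := (y.den : ℤ) with hw_def
  have hb : 0 < b := by rw [hb_def]; exact_mod_cast x.pos
  have hw : 0 < w := by rw [hw_def]; exact_mod_cast y.pos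
  have hcoab : IsCoprime a b := by
    rw [Int.isCoprime_iff_gcd_eq_one]
    exact x.reduced
  have hcouw : IsCoprime u w := by
    rw [Int.isCoprime_iff_gcd_eq_one]
    exact y.reduced
  -- handle the a = 0 case upfront
  by_cases ha0 : a = 0
  · left
    have hx0 : x = 0 := by rwa [← Rat.num_eq_zero]
    constructor
    · exact hx0
    · have : y^2 = 0 := by rw [h, hx0]; ring
      exact pow_eq_zero_iff (by norm_num) |>.mp this
  -- coprimality facts
  have hco2 : IsCoprime b (a^2 - a*b + b^2) := by
    have h1 : IsCoprime b (a^2 + b*(b-a)) :=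
      (hcoab.symm.pow_right).add_mul_left_right (b-a)
    rwa [show a^2 + b*(b-a) = a^2 - a*b + b^2 by ring] at h1
  have hcoRHS : IsCoprime b (a*(a^2 - a*b + b^2)) := hcoab.symm.mul_right hco2
  have keyr : u^2 * b^3 = (a*(a^2 - a*b + b^2)) * w^2 := by linear_combination key
  -- b³ ∣ w² and w² ∣ b³
  have hb3w2 : b^3 ∣ w^2 := by
    have hd : b^3 ∣ (a*(a^2 - a*b + b^2)) * w^2 := ⟨u^2, by linarith [keyr]⟩
    exact (hcoRHS.pow_left).dvd_of_dvd_mul_left hd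
  have hw2b3 : w^2 ∣ b^3 := by
    have hd : w^2 ∣ u^2 * b^3 := ⟨a*(a^2 - a*b + b^2), by linarith [keyr]⟩
    exact (hcouw.pow.symm : IsCoprime (w^2) (u^2)).dvd_of_dvd_mul_left hd
  have hb3 : b^3 = w^2 := Int.dvd_antisymm (by positivity) (by positivity) hb3w2 hw2b3
  -- b is a square
  have hwb2 : w ∣ b^2 := by
    have : w^2 ∣ (b^2)^2 := by
      rw [show (b^2)^2 = b * b^3 by ring, ← hb3]
      exact ⟨b, by ring⟩
    exact (Int.pow_dvd_pow_iff (by norm_num)).mp this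
  obtain ⟨s, hs⟩ := hwb2
  have hbs : b = s^2 := by
    have h1 : (w*s)^2 = b * w^2 := by
      rw [← hs, ← hb3]; ring
    have h2 : w^2 * s^2 = w^2 * b := by linear_combination h1
    exact (mul_left_cancel₀ (pow_ne_zero 2 (by omega : w ≠ 0)) h2).symm
  -- u² = a (a² - ab + b²)
  have hu2 : u^2 = a*(a^2 - a*b + b^2) := by
    have h1 : u^2 * w^2 = (a*(a^2 - a*b + b^2)) * w^2 := by
      conv_lhs => rw [← hb3]
      exact keyr
    exact mul_right_cancel₀ (pow_ne_zero 2 (by omega : w ≠ 0)) h1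
  -- second factor is positive
  have hpos : 0 < a^2 - a*b + b^2 := by nlinarith [sq_nonneg (2*a - b), sq_nonneg b]
  -- a is a square (a = -e² would force a ≤ 0 and a(pos) = u² ≥ 0 forces a = 0)
  have hcoa2 : IsCoprime a (a^2 - a*b + b^2) := by
    have h1 : IsCoprime a (b^2 + a*(a-b)) :=
      (hcoab.pow_right).add_mul_left_right (a-b)
    rwa [show b^2 + a*(a-b) = a^2 - a*b + b^2 by ring] at h1
  obtain ⟨e, he⟩ := Int.sq_of_isCoprime hcoa2 (by rw [← hu2] : a * (a^2 - a*b + b^2) = u^2)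
  have hae : a = e^2 := by
    rcases he with he | he
    · exact he
    · exfalso
      have hua : 0 ≤ a := by
        by_contra hlt
        push_neg at hlt
        nlinarith [sq_nonneg u, hu2, hpos]
      have he2 : e^2 = 0 := by linarith [sq_nonneg e, hua, he]
      apply ha0
      rw [he, he2]; ring
  obtain ⟨f, hf⟩ := Int.sq_of_isCoprime hcoa2.symm
    (by rw [mul_comm, ← hu2] : (a^2 - a*b + b^2) * a = u^2)
  have hff : a^2 - a*b + b^2 = f^2 := by
    rcases hf with hf | hf
    · exact hf
    · exfalso; nlinarith [sq_nonneg f]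
  -- apply the quartic
  have hcoes : IsCoprime e s := by
    have h1 : IsCoprime (e^2) (s^2) := by rwa [← hae, ← hbs]
    exact (h1.of_isCoprime_of_dvd_left ⟨e, by ring⟩).of_isCoprime_of_dvd_right ⟨s, by ring⟩
  have hquart : e^4 - e^2*s^2 + s^4 = f^2 := by
    have : a^2 - a*b + b^2 = f^2 := hff
    rw [hae, hbs] at this
    linear_combination this
  rcases quartic_main hcoes hquart with h0 | h0 | h0
  · exfalso; apply ha0; rw [hae, h0]; ring
  · exfalso; have : b = 0 := by rw [hbs, h0]; ring
    omega
  · -- a = b, so x = 1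
    have hab : a = b := by rw [hae, hbs, h0]
    have hx1 : x = 1 := by
      have hx : (x:ℚ) = (a:ℚ)/(b:ℚ) := by
        rw [ha_def, hb_def]
        push_cast
        exact (Rat.num_div_den x).symm
      rw [hx, hab]
      field_simp
    have hy2 : y^2 = 1 := by rw [h, hx1]; ring
    have : (y-1)*(y+1) = 0 := by linear_combination hy2
    rcases mul_eq_zero.mp this with h' | h'
    · right; left; exact ⟨hx1, by linarith [h']⟩
    · right; right; exact ⟨hx1, by linarith [h']⟩

end ArithmeticLemmas

/-- The modular curve `X₁(2,12)`: the elliptic curve `y² = x³ − x² + x` (24A4). -/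
def X1212 : WeierstrassCurve ℚ := ⟨0, -1, 0, 1, 0⟩

namespace X1212aux

open WeierstrassCurve.Affine WeierstrassCurve.Affine.Point

lemma a1 : X1212.a₁ = 0 := rfl
lemma a2 : X1212.a₂ = -1 := rfl
lemma a3 : X1212.a₃ = 0 := rfl
lemma a4 : X1212.a₄ = 1 := rfl
lemma a6 : X1212.a₆ = 0 := rfl

lemma hT : X1212.toAffine.Nonsingular 0 0 := by
  simp [nonsingular_iff, equation_iff, X1212]

lemma hP : X1212.toAffine.Nonsingular 1 1 := by
  simp [nonsingular_iff, equation_iff, X1212]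
  norm_num

lemma hQ : X1212.toAffine.Nonsingular 1 (-1) := by
  simp [nonsingular_iff, equation_iff, X1212]
  norm_num

lemma some_eq_some {x₁ y₁ x₂ y₂ : ℚ} (h₁ : X1212.toAffine.Nonsingular x₁ y₁)
    (h₂ : X1212.toAffine.Nonsingular x₂ y₂) (hx : x₁ = x₂) (hy : y₁ = y₂) :
    Point.some _ _ h₁ = Point.some _ _ h₂ := by
  subst hx; subst hy; rfl

noncomputable def P : X1212.toAffine.Point := Point.some _ _ hP
noncomputable def T : X1212.toAffine.Point := Point.some _ _ hT
noncomputable def Q : X1212.toAffine.Point := Point.some _ _ hQ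

lemma negY11 : X1212.toAffine.negY 1 1 = -1 := by
  simp [negY, X1212]

lemma hy1 : (1:ℚ) ≠ X1212.toAffine.negY 1 1 := by rw [negY11]; norm_num

lemma PP : P + P = T := by
  rw [P, T, add_self_of_Y_ne hy1]
  apply some_eq_some
  · show X1212.toAffine.addX 1 1 (X1212.toAffine.slope 1 1 1 1) = 0
    rw [slope_of_Y_ne rfl hy1, negY11]
    simp [addX, X1212]
    norm_num
  · show X1212.toAffine.addY 1 1 1 (X1212.toAffine.slope 1 1 1 1) = 0
    rw [addY, slope_of_Y_ne rfl hy1, negY11]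
    simp [addX, negAddY, negY, X1212]
    norm_num

lemma TP : T + P = Q := by
  have hx : (0:ℚ) ≠ 1 := by norm_num
  rw [T, P, Q, add_of_X_ne hx]
  apply some_eq_some
  · show X1212.toAffine.addX 0 1 (X1212.toAffine.slope 0 1 0 1) = 1
    rw [slope_of_X_ne hx]
    simp [addX, X1212]
  · show X1212.toAffine.addY 0 1 0 (X1212.toAffine.slope 0 1 0 1) = -1
    rw [addY, slope_of_X_ne hx]
    simp [addX, negAddY, negY, X1212]

lemma TT : T + T = 0 := by
  rw [T, add_self_of_Y_eq (by simp [negY, X1212])]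

lemma QP : Q + P = 0 := by
  rw [Q, P, add_of_Y_eq rfl (by rw [negY11])]

lemma P2 : (2:ℤ) • P = T := by rw [two_zsmul, PP]

lemma P4 : (4:ℤ) • P = 0 := by
  rw [show (4:ℤ) = 2 + 2 by norm_num, add_zsmul, P2, TT]

lemma P3 : (3:ℤ) • P = Q := by
  rw [show (3:ℤ) = 2 + 1 by norm_num, add_zsmul, P2, one_zsmul, TP]

noncomputable def f : ZMod 4 →+ X1212.toAffine.Point :=
  ZMod.lift 4 ⟨zmultiplesHom _ P, by simpa using P4⟩

lemma f1 : f 1 = P := by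
  have : ((1:ℤ) : ZMod 4) = 1 := by norm_num
  rw [f, ← this, ZMod.lift_coe]
  simp

lemma f2 : f 2 = T := by
  have : ((2:ℤ) : ZMod 4) = 2 := by norm_num
  rw [f, ← this, ZMod.lift_coe]
  simpa using P2

lemma f3 : f 3 = Q := by
  have : ((3:ℤ) : ZMod 4) = 3 := by norm_num
  rw [f, ← this, ZMod.lift_coe]
  simpa using P3

lemma finj : Function.Injective f := by
  rw [injective_iff_map_eq_zero]
  intro a ha
  fin_cases a
  · rfl
  · rw [show (⟨1, by norm_num⟩ : Fin 4) = (1 : ZMod 4) from rfl, f1] at ha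
    exact absurd ha (some_ne_zero _)
  · rw [show (⟨2, by norm_num⟩ : Fin 4) = (2 : ZMod 4) from rfl, f2] at ha
    exact absurd ha (some_ne_zero _)
  · rw [show (⟨3, by norm_num⟩ : Fin 4) = (3 : ZMod 4) from rfl, f3] at ha
    exact absurd ha (some_ne_zero _)

lemma fsurj : Function.Surjective f := by
  intro R
  rcases R with _ | @⟨x, y, hns⟩
  · exact ⟨0, map_zero f⟩
  · have heq : y^2 = x^3 - x^2 + x := by
      have h1 := hns.1
      rw [equation_iff] at h1
      rw [show X1212.toAffine.a₁ = 0 from rfl, show X1212.toAffine.a₂ = -1 from rfl,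
        show X1212.toAffine.a₃ = 0 from rfl, show X1212.toAffine.a₄ = 1 from rfl,
        show X1212.toAffine.a₆ = 0 from rfl] at h1
      linear_combination h1
    rcases rat_points_classification heq with ⟨hx, hy⟩ | ⟨hx, hy⟩ | ⟨hx, hy⟩
    · exact ⟨2, by rw [f2, T]; exact some_eq_some _ _ hx.symm hy.symm⟩
    · exact ⟨1, by rw [f1, P]; exact some_eq_some _ _ hx.symm hy.symm⟩
    · exact ⟨3, by rw [f3, Q]; exact some_eq_some _ _ hx.symm hy.symm⟩

end X1212aux

/-- The group of rational points of `y² = x³ − x² + x` (the modular curve `X₁(2,12)`)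
is isomorphic to `ℤ/4ℤ`. -/
theorem X1212_rat_points_equiv_zmod_four :
    Nonempty (X1212.toAffine.Point ≃+ ZMod 4) := by
  exact ⟨(AddEquiv.ofBijective X1212aux.f ⟨X1212aux.finj, X1212aux.fsurj⟩).symm⟩
end

section
/- The rational points of the elliptic curve y² + y = x³ (the modular curve X₁(3,9), 27A3 in Cremona's tables) form a group isomorphic to ℤ/3ℤ; explicitly E(ℚ) = {O, (0,0), (0,−1)}. -/
open WeierstrassCurve

/-- Descent lemma: the only rational solutions of `y² + y = x³` are `(0,0)` and `(0,-1)`. -/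
private lemma X139_aux (x y : ℚ) (h : y ^ 2 + y = x ^ 3) : x = 0 ∧ (y = 0 ∨ y = -1) := by
  set a : ℤ := x.num with ha
  set m : ℤ := (x.den : ℤ) with hm
  set b : ℤ := y.num with hb
  set n : ℤ := (y.den : ℤ) with hn
  have hm0 : 0 < m := Int.natCast_pos.mpr x.pos
  have hn0 : 0 < n := Int.natCast_pos.mpr y.pos
  have hmQ : (m : ℚ) ≠ 0 := by exact_mod_cast hm0.ne'
  have hnQ : (n : ℚ) ≠ 0 := by exact_mod_cast hn0.ne'
  have hx : x = (a : ℚ) / (m : ℚ) := (Rat.num_div_den x).symm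
  have hy : y = (b : ℚ) / (n : ℚ) := (Rat.num_div_den y).symm
  have hco_am : IsCoprime a m := by
    rw [Int.isCoprime_iff_gcd_eq_one]
    exact x.reduced
  have hco_bn : IsCoprime b n := by
    rw [Int.isCoprime_iff_gcd_eq_one]
    exact y.reduced
  have hint : m ^ 3 * (b ^ 2 + b * n) = a ^ 3 * n ^ 2 := by
    have h' := h
    rw [hx, hy] at h'
    field_simp at h'
    have hZ : (m ^ 3 * (b ^ 2 + b * n)) * n = (a ^ 3 * n ^ 2) * n := by
      have : (((m ^ 3 * (b ^ 2 + b * n)) * n : ℤ) : ℚ) = (((a ^ 3 * n ^ 2) * n : ℤ) : ℚ) := by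
        push_cast
        linear_combination (n : ℚ) * h'
      exact_mod_cast this
    exact mul_right_cancel₀ hn0.ne' hZ
  -- coprimality of the factors
  have h1 : IsCoprime (b + n) n := by simpa using hco_bn.add_mul_left_left 1
  have h3 : IsCoprime (b ^ 2 + b * n) (n ^ 2) := by
    have := (hco_bn.mul_left h1).pow_right (n := 2)
    have e : b * (b + n) = b ^ 2 + b * n := by ring
    rwa [e] at this
  have hn2m3 : n ^ 2 ∣ m ^ 3 := by
    refine h3.symm.dvd_of_dvd_mul_right ?_
    exact ⟨a ^ 3, by linear_combination hint⟩
  have hm3n2 : m ^ 3 ∣ n ^ 2 := by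
    refine ((hco_am.symm.pow (m := 3) (n := 3))).dvd_of_dvd_mul_left ?_
    exact ⟨b ^ 2 + b * n, by linear_combination -hint⟩
  have hmn : m ^ 3 = n ^ 2 :=
    Int.dvd_antisymm (by positivity) (by positivity) hm3n2 hn2m3
  -- m = c², n = c³
  set q : ℚ := (n : ℚ) / (m : ℚ) with hq
  have hq2 : q ^ 2 = (m : ℚ) := by
    rw [hq, div_pow]
    rw [show ((n : ℚ) ^ 2) = ((n ^ 2 : ℤ) : ℚ) by push_cast; ring, ← hmn]
    push_cast
    field_simp
  have hqden : q.den = 1 := by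
    have : (q ^ 2).den = 1 := by rw [hq2]; exact Rat.den_intCast m
    rw [Rat.den_pow] at this
    nlinarith [q.pos]
  set c : ℤ := q.num with hc
  have hcq : (c : ℚ) = q := by
    rw [hc, ← Rat.den_eq_one_iff]; exact hqden
  have hc2 : c ^ 2 = m := by
    have : (c : ℚ) ^ 2 = ((m : ℚ)) := by rw [hcq]; exact hq2
    exact_mod_cast this
  have hc3 : c ^ 3 = n := by
    have : (c : ℚ) ^ 3 = (n : ℚ) := by
      rw [hcq, hq]
      field_simp
      exact_mod_cast hmn.symm
    exact_mod_cast this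
  have hc0 : c ≠ 0 := by
    intro h0
    rw [h0] at hc3
    simp at hc3
    omega
  -- reduce to b (b + c³) = a³
  have hcube : b ^ 2 + b * c ^ 3 = a ^ 3 := by
    have h6 : (c ^ 6 : ℤ) ≠ 0 := by positivity
    apply mul_left_cancel₀ h6
    rw [← hc2, ← hc3] at hint
    linear_combination hint
  have hco_bc3 : IsCoprime b (c ^ 3) := by rwa [hc3]
  have hco_bbc : IsCoprime b (b + c ^ 3) := by
    have := hco_bc3.add_mul_left_right 1
    simpa [add_comm] using this
  have hprod : b * (b + c ^ 3) = a ^ 3 := by linear_combination hcube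
  obtain ⟨s, hs⟩ := Int.eq_pow_of_mul_eq_pow_odd_left hco_bbc (by decide) hprod
  obtain ⟨t, ht⟩ := Int.eq_pow_of_mul_eq_pow_odd_right hco_bbc (by decide) hprod
  have hflt := fermatLastTheoremFor_iff_int.mp fermatLastTheoremThree
  have hstc : s ^ 3 + c ^ 3 = t ^ 3 := by linear_combination ht - hs
  have hst : s = 0 ∨ t = 0 := by
    by_contra hcon
    push_neg at hcon
    exact hflt s c t hcon.1 hc0 hcon.2 hstc
  have hy0 : y = 0 ∨ y = -1 := by
    rcases hst with h0 | h0
    · left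
      rw [h0] at hs
      simp at hs
      exact Rat.num_eq_zero.mp hs
    · right
      rw [h0] at ht
      simp at ht
      have hbn : b = -n := by rw [← hc3]; omega
      rw [hy, hbn]
      push_cast
      field_simp
  have hx3 : x ^ 3 = 0 := by rcases hy0 with rfl | rfl <;> linear_combination -h
  have hx0 : x = 0 := by
    exact pow_eq_zero_iff (by norm_num : 3 ≠ 0) |>.mp hx3
  exact ⟨hx0, hy0⟩

/-- The modular curve `X₁(3,9)`: the elliptic curve `y² + y = x³` (27A3). -/
def X139 : WeierstrassCurve ℚ := ⟨0, 0, 1, 0, 0⟩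

/-- The group of rational points of `y² + y = x³` (the modular curve `X₁(3,9)`) is isomorphic
to `ℤ/3ℤ`; explicitly, the only affine rational points are `(0,0)` and `(0,−1)`. -/
theorem X139_rat_points_equiv_zmod_three :
    Nonempty (X139.toAffine.Point ≃+ ZMod 3) ∧
      ∀ x y : ℚ, X139.toAffine.Equation x y → x = 0 ∧ (y = 0 ∨ y = -1) := by
  have key : ∀ x y : ℚ, X139.toAffine.Equation x y → x = 0 ∧ (y = 0 ∨ y = -1) := by
    intro x y hxy
    rw [Affine.equation_iff] at hxy
    simp only [X139] at hxy
    exact X139_aux x y (by linear_combination hxy)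
  refine ⟨?_, key⟩
  have hP : X139.toAffine.Nonsingular 0 0 := by
    rw [Affine.nonsingular_iff, Affine.equation_iff]
    simp only [X139]
    norm_num
  have hQ : X139.toAffine.Nonsingular 0 (-1) := by
    rw [Affine.nonsingular_iff, Affine.equation_iff]
    simp only [X139]
    norm_num
  set P : X139.toAffine.Point := Affine.Point.some _ _ hP with hPdef
  set Q : X139.toAffine.Point := Affine.Point.some _ _ hQ with hQdef
  have hPQ : P ≠ Q := by
    intro hcon
    rw [hPdef, hQdef, Affine.Point.some.injEq] at hcon
    norm_num at hcon
  have hP0 : P ≠ 0 := by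
    intro hcon
    rw [hPdef] at hcon
    exact Affine.Point.some_ne_zero hP hcon
  have hQ0 : Q ≠ 0 := by
    intro hcon
    rw [hQdef] at hcon
    exact Affine.Point.some_ne_zero hQ hcon
  have hclass : ∀ p : X139.toAffine.Point, p = 0 ∨ p = P ∨ p = Q := by
    intro p
    cases p with
    | zero => exact Or.inl rfl
    | @some x y h =>
      obtain ⟨hx, hy⟩ := key x y h.1
      subst hx
      rcases hy with rfl | rfl
      · exact Or.inr (Or.inl rfl)
      · exact Or.inr (Or.inr rfl)
  have hPP : P + P = Q := by
    rcases hclass (P + P) with h | h | h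
    · exfalso
      rcases hclass (P + Q) with h2 | h2 | h2
      · apply hPQ
        have e1 : Q = -P := by rw [eq_neg_iff_add_eq_zero, add_comm]; exact h2
        have e2 : P = -P := by rw [eq_neg_iff_add_eq_zero]; exact h
        rw [e1, ← e2]
      · exact hQ0 (by rwa [← add_eq_left (a := P)])
      · exact hP0 (by rwa [← add_eq_right (b := Q)])
    · exact absurd (add_eq_left.mp h) hP0
    · exact h
  have hPQ0 : P + Q = 0 := by
    rcases hclass (P + Q) with h | h | h
    · exact h
    · exact absurd (add_eq_right.mp (by rwa [add_comm] at h)) hQ0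
    · exact absurd (add_eq_right.mp h) hP0
  have h3P : (zmultiplesHom _ P) (3 : ℤ) = 0 := by
    show (3 : ℤ) • P = 0
    rw [show (3 : ℤ) = 1 + 2 by norm_num, add_zsmul, one_zsmul, two_zsmul, hPP]
    exact hPQ0
  set g : ZMod 3 →+ X139.toAffine.Point := ZMod.lift 3 ⟨zmultiplesHom _ P, h3P⟩ with hg
  have g1 : g 1 = P := by
    rw [hg, show (1 : ZMod 3) = ((1 : ℤ) : ZMod 3) by norm_num, ZMod.lift_coe]
    simp [zmultiplesHom_apply]
  have g2 : g 2 = Q := by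
    rw [hg, show (2 : ZMod 3) = ((2 : ℤ) : ZMod 3) by norm_num, ZMod.lift_coe]
    show (2 : ℤ) • P = Q
    rw [two_zsmul, hPP]
  have hsurj : Function.Surjective g := by
    intro p
    rcases hclass p with rfl | rfl | rfl
    · exact ⟨0, map_zero g⟩
    · exact ⟨1, g1⟩
    · exact ⟨2, g2⟩
  have hinj : Function.Injective g := by
    rw [injective_iff_map_eq_zero]
    intro a ha
    have hall : ∀ b : ZMod 3, b = 0 ∨ b = 1 ∨ b = 2 := by decide
    rcases hall a with rfl | rfl | rfl
    · rfl
    · rw [g1] at ha; exact absurd ha hP0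
    · rw [g2] at ha; exact absurd ha hQ0
  exact ⟨(AddEquiv.ofBijective g ⟨hinj, hsurj⟩).symm⟩
end

section
/- The affine plane curve s² = (t² − 2t − 1)(t² + 2t − 1) is birationally equivalent over ℚ to the elliptic curve y² = x³ − x. -/
set_option maxHeartbeats 1000000
set_option synthInstance.maxHeartbeats 1000000


open MvPolynomial

set_option synthInstance.maxHeartbeats 400000

/-- The coordinate ring of the affine quartic curve `s² = (t² − 2t − 1)(t² + 2t − 1)`,
with `X 0 = t` and `X 1 = s`. -/
abbrev quarticCurveRing : Type :=
  MvPolynomial (Fin 2) ℚ ⧸ Ideal.span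
    {(X 1 : MvPolynomial (Fin 2) ℚ) ^ 2 -
      ((X 0) ^ 2 - 2 * X 0 - 1) * ((X 0) ^ 2 + 2 * X 0 - 1)}

/-- The coordinate ring of the affine elliptic curve `y² = x³ − x`,
with `X 0 = x` and `X 1 = y`. -/
abbrev ellipticCurveRing : Type :=
  MvPolynomial (Fin 2) ℚ ⧸ Ideal.span
    {(X 1 : MvPolynomial (Fin 2) ℚ) ^ 2 - ((X 0) ^ 3 - X 0)}

/-! ### Auxiliary setup -/

/-- The defining polynomial of the quartic curve. -/
noncomputable abbrev pC : MvPolynomial (Fin 2) ℚ :=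
  (X 1 : MvPolynomial (Fin 2) ℚ) ^ 2 -
    ((X 0) ^ 2 - 2 * X 0 - 1) * ((X 0) ^ 2 + 2 * X 0 - 1)

/-- The defining polynomial of the elliptic curve. -/
noncomputable abbrev pE : MvPolynomial (Fin 2) ℚ :=
  (X 1 : MvPolynomial (Fin 2) ℚ) ^ 2 - ((X 0) ^ 3 - X 0)

theorem no_sqrt {c : Polynomial ℚ} (r : ℚ) (h : c.eval r < 0) (z : RatFunc ℚ)
    (hz : z ^ 2 = algebraMap (Polynomial ℚ) (RatFunc ℚ) c) : False := by
  have hint : IsIntegral (Polynomial ℚ) z := by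
    refine ⟨Polynomial.X ^ 2 - Polynomial.C c, Polynomial.monic_X_pow_sub_C c (by norm_num), ?_⟩
    simp [Polynomial.eval₂, hz]
  obtain ⟨u, hu⟩ := IsIntegrallyClosed.isIntegral_iff.mp hint
  have : algebraMap (Polynomial ℚ) (RatFunc ℚ) (u ^ 2)
      = algebraMap (Polynomial ℚ) (RatFunc ℚ) c := by
    rw [map_pow, hu, hz]
  have hu2 : u ^ 2 = c := IsFractionRing.injective (Polynomial ℚ) (RatFunc ℚ) this
  have := congrArg (Polynomial.eval r) hu2
  simp only [Polynomial.eval_pow] at this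
  nlinarith [sq_nonneg (u.eval r)]

theorem prime_quad {c : Polynomial ℚ} (r : ℚ) (h : c.eval r < 0) :
    Prime (Polynomial.X ^ 2 - Polynomial.C c : Polynomial (Polynomial ℚ)) := by
  rw [← UniqueFactorizationMonoid.irreducible_iff_prime]
  have hm : (Polynomial.X ^ 2 - Polynomial.C c : Polynomial (Polynomial ℚ)).Monic :=
    Polynomial.monic_X_pow_sub_C c (by norm_num)
  rw [hm.irreducible_iff_irreducible_map_fraction_map (K := RatFunc ℚ)]
  have hmap : (Polynomial.X ^ 2 - Polynomial.C c : Polynomial (Polynomial ℚ)).map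
        (algebraMap (Polynomial ℚ) (RatFunc ℚ))
      = Polynomial.X ^ 2 - Polynomial.C (algebraMap (Polynomial ℚ) (RatFunc ℚ) c) := by
    simp
  rw [hmap]
  have hd : (Polynomial.X ^ 2 -
      Polynomial.C (algebraMap (Polynomial ℚ) (RatFunc ℚ) c)).natDegree = 2 :=
    Polynomial.natDegree_X_pow_sub_C
  rw [Polynomial.irreducible_iff_roots_eq_zero_of_degree_le_three (by omega) (by omega)]
  by_contra hroots
  obtain ⟨z, hzmem⟩ := Multiset.exists_mem_of_ne_zero hroots
  rw [Polynomial.mem_roots'] at hzmem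
  have : z ^ 2 = algebraMap (Polynomial ℚ) (RatFunc ℚ) c := by
    have := hzmem.2
    simp only [Polynomial.IsRoot, Polynomial.eval_sub, Polynomial.eval_pow, Polynomial.eval_X,
      Polynomial.eval_C, sub_eq_zero] at this
    exact this
  exact no_sqrt r h z this

/-- Variable-swap + currying equivalence `ℚ[t,s] ≃ (ℚ[x])[y]` sending
`X 1` to the outer variable. -/
noncomputable def Ψ : MvPolynomial (Fin 2) ℚ ≃ₐ[ℚ] Polynomial (Polynomial ℚ) :=
  ((renameEquiv ℚ (Equiv.swap (0 : Fin 2) 1)).trans (finSuccEquiv ℚ 1)).trans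
    (Polynomial.mapAlgEquiv ((finSuccEquiv ℚ 0).trans
      (Polynomial.mapAlgEquiv (isEmptyAlgEquiv ℚ (Fin 0)))))

theorem Ψ_X0 : Ψ (X 0) = Polynomial.C Polynomial.X := by
  simp only [Ψ, AlgEquiv.trans_apply, renameEquiv_apply, rename_X, Equiv.swap_apply_left]
  rw [show ((1 : Fin 2)) = (0 : Fin 1).succ from rfl, finSuccEquiv_X_succ]
  simp [Polynomial.mapAlgEquiv, finSuccEquiv_X_zero]

theorem Ψ_X1 : Ψ (X 1) = Polynomial.X := by
  simp [Ψ, renameEquiv_apply, rename_X, Equiv.swap_apply_right, finSuccEquiv_X_zero,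
    Polynomial.mapAlgEquiv]

theorem prime_pC : Prime pC := by
  have h : Ψ pC = Polynomial.X ^ 2 - Polynomial.C
      ((Polynomial.X ^ 2 - 2 * Polynomial.X - 1) * (Polynomial.X ^ 2 + 2 * Polynomial.X - 1)) := by
    simp only [pC, map_sub, map_mul, map_pow, map_one, map_ofNat, Ψ_X0, Ψ_X1, map_add]
  refine (MulEquiv.prime_iff Ψ.toRingEquiv.toMulEquiv).mp ?_
  show Prime (Ψ pC)
  rw [h]
  exact prime_quad 1 (by norm_num)

theorem prime_pE : Prime pE := by
  have h : Ψ pE = Polynomial.X ^ 2 - Polynomial.C (Polynomial.X ^ 3 - Polynomial.X) := by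
    simp only [pE, map_sub, map_pow, Ψ_X0, Ψ_X1]
  refine (MulEquiv.prime_iff Ψ.toRingEquiv.toMulEquiv).mp ?_
  show Prime (Ψ pE)
  rw [h]
  exact prime_quad (-2) (by norm_num)

instance : (Ideal.span {pC}).IsPrime :=
  (Ideal.span_singleton_prime prime_pC.ne_zero).mpr prime_pC

instance : (Ideal.span {pE}).IsPrime :=
  (Ideal.span_singleton_prime prime_pE.ne_zero).mpr prime_pE

theorem spanC_eq : Ideal.span {(X 1 : MvPolynomial (Fin 2) ℚ) ^ 2 -
    ((X 0) ^ 2 - 2 * X 0 - 1) * ((X 0) ^ 2 + 2 * X 0 - 1)} = Ideal.span {pC} := rfl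

theorem spanE_eq : Ideal.span {(X 1 : MvPolynomial (Fin 2) ℚ) ^ 2 - ((X 0) ^ 3 - X 0)}
    = Ideal.span {pE} := rfl

instance : IsDomain quarticCurveRing :=
  Ideal.Quotient.isDomain (Ideal.span {pC})

instance : IsDomain ellipticCurveRing :=
  Ideal.Quotient.isDomain (Ideal.span {pE})


/-! ### The rational maps -/

theorem hC : (C (1/2 : ℚ) : MvPolynomial (Fin 2) ℚ) * 2 = 1 := by
  rw [show (2 : MvPolynomial (Fin 2) ℚ) = C 2 from rfl, ← map_mul]
  norm_num

noncomputable def Gaux : MvPolynomial (Fin 2) ℚ →ₐ[ℚ] MvPolynomial (Fin 2) ℚ :=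
  aeval ![C (1/2 : ℚ) * (X 1 + X 0 ^ 2 - 1), C (1/2 : ℚ) * (X 0 * (X 1 + X 0 ^ 2 - 3))]

theorem Gaux_pE : Gaux pE = pC * (C (1/2 : ℚ) ^ 3 * (3 - X 1 - X 0 ^ 2)) := by
  simp only [Gaux, pE, pC, map_sub, map_pow, map_mul, aeval_X, Matrix.cons_val_zero,
    Matrix.cons_val_one, Matrix.head_cons]
  linear_combination (C (1/2 : ℚ) + 2 * C (1/2:ℚ)^2 - X 1 * C (1/2:ℚ) - 2 * X 1 * C (1/2:ℚ)^2
    - X 0^2 * C (1/2:ℚ) - 11 * X 0^2 * C (1/2:ℚ)^2 + 6 * X 0^2 * X 1 * C (1/2:ℚ)^2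
    - X 0^2 * X 1^2 * C (1/2:ℚ)^2 + 6 * X 0^4 * C (1/2:ℚ)^2 - 2 * X 0^4 * X 1 * C (1/2:ℚ)^2
    - X 0^6 * C (1/2:ℚ)^2) * hC

noncomputable def xL : FractionRing ellipticCurveRing :=
  algebraMap ellipticCurveRing (FractionRing ellipticCurveRing) (Ideal.Quotient.mk (Ideal.span {pE}) (X 0))
noncomputable def yL : FractionRing ellipticCurveRing :=
  algebraMap ellipticCurveRing (FractionRing ellipticCurveRing) (Ideal.Quotient.mk (Ideal.span {pE}) (X 1))

theorem rel_L : yL ^ 2 = xL ^ 3 - xL := by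
  have h0 : (Ideal.Quotient.mk (Ideal.span {pE})) pE = 0 :=
    Ideal.Quotient.eq_zero_iff_mem.mpr (Ideal.subset_span rfl)
  have h1 := congrArg (algebraMap ellipticCurveRing (FractionRing ellipticCurveRing)) h0
  simp only [pE, map_sub, map_pow, map_zero] at h1
  rw [sub_eq_zero] at h1
  exact h1

theorem xL_ne_one : xL - 1 ≠ 0 := by
  intro h
  have h1 : algebraMap ellipticCurveRing (FractionRing ellipticCurveRing) (Ideal.Quotient.mk (Ideal.span {pE}) (X 0 - 1)) = 0 := by
    rw [map_sub, map_one, map_sub, map_one]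
    exact h
  have h2 : Ideal.Quotient.mk (Ideal.span {pE}) (X 0 - 1) = 0 := by
    apply IsFractionRing.injective ellipticCurveRing (FractionRing ellipticCurveRing)
    rw [map_zero]; exact h1
  rw [Ideal.Quotient.eq_zero_iff_mem, Ideal.mem_span_singleton] at h2
  obtain ⟨c, hc⟩ := h2
  have := congrArg (aeval ![(0 : ℚ), 0]) hc
  simp only [pE, map_sub, map_pow, map_mul, map_one, aeval_X, Matrix.cons_val_zero,
    Matrix.cons_val_one, Matrix.head_cons] at this
  norm_num at this

noncomputable def Haux : MvPolynomial (Fin 2) ℚ →ₐ[ℚ] FractionRing ellipticCurveRing :=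
  aeval ![yL * (xL - 1)⁻¹, (xL ^ 2 - 2 * xL - 1) * (xL - 1)⁻¹]

theorem Haux_pC : Haux pC = 0 := by
  have hx := xL_ne_one
  simp only [Haux, pC, map_sub, map_pow, map_mul, map_add, map_one, map_ofNat, aeval_X,
    Matrix.cons_val_zero, Matrix.cons_val_one, Matrix.head_cons]
  field_simp
  linear_combination (6 - yL ^ 2 - 11 * xL + 6 * xL ^ 2 - xL ^ 3) * rel_L

noncomputable def G : ellipticCurveRing →+* quarticCurveRing :=
  Ideal.Quotient.lift (Ideal.span {pE})
    ((Ideal.Quotient.mk (Ideal.span {pC})).comp Gaux.toRingHom) (by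
      intro a ha
      rw [Ideal.mem_span_singleton] at ha
      obtain ⟨c, rfl⟩ := ha
      show (Ideal.Quotient.mk (Ideal.span {pC})) (Gaux (pE * c)) = 0
      rw [map_mul, Gaux_pE]
      refine Ideal.Quotient.eq_zero_iff_mem.mpr ?_
      exact Ideal.mul_mem_right _ _ (Ideal.mul_mem_right _ _ (Ideal.subset_span rfl)))

theorem G_mk (a : MvPolynomial (Fin 2) ℚ) :
    G (Ideal.Quotient.mk (Ideal.span {pE}) a) = Ideal.Quotient.mk (Ideal.span {pC}) (Gaux a) :=
  rfl

noncomputable def H : quarticCurveRing →+* FractionRing ellipticCurveRing :=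
  Ideal.Quotient.lift (Ideal.span {pC}) Haux.toRingHom (by
    intro a ha
    rw [Ideal.mem_span_singleton] at ha
    obtain ⟨c, rfl⟩ := ha
    show Haux (pC * c) = 0
    rw [map_mul, Haux_pC, zero_mul])

theorem H_mk (a : MvPolynomial (Fin 2) ℚ) :
    H (Ideal.Quotient.mk (Ideal.span {pC}) a) = Haux a :=
  rfl

theorem HG : H.comp G = algebraMap ellipticCurveRing (FractionRing ellipticCurveRing) := by
  apply Ideal.Quotient.ringHom_ext
  apply MvPolynomial.ringHom_ext
  · intro r
    exact RingHom.congr_fun (Subsingleton.elim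
      (((H.comp G).comp (Ideal.Quotient.mk (Ideal.span {pE}))).comp
        (C : ℚ →+* MvPolynomial (Fin 2) ℚ))
      (((algebraMap ellipticCurveRing (FractionRing ellipticCurveRing)).comp (Ideal.Quotient.mk (Ideal.span {pE}))).comp
        (C : ℚ →+* MvPolynomial (Fin 2) ℚ))) r
  · intro i
    fin_cases i
    · show H (G (Ideal.Quotient.mk (Ideal.span {pE}) (X 0))) = xL
      have hx := xL_ne_one
      rw [G_mk, H_mk]
      simp only [Gaux, Haux, aeval_X, Matrix.cons_val_zero, Matrix.cons_val_one, Matrix.head_cons,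
        map_mul, map_add, map_sub, map_pow, map_one, aeval_C]
      have h2 : (algebraMap ℚ (FractionRing ellipticCurveRing)) (1/2) = (2 : FractionRing ellipticCurveRing)⁻¹ := by
        rw [map_div₀, map_one, map_ofNat, one_div]
      rw [h2]
      haveI : CharZero (FractionRing ellipticCurveRing) :=
        charZero_of_injective_algebraMap (algebraMap ℚ (FractionRing ellipticCurveRing)).injective
      have h20 : (2 : FractionRing ellipticCurveRing) ≠ 0 := two_ne_zero
      have hw : (xL - 1) * (xL - 1)⁻¹ = 1 := mul_inv_cancel₀ hx
      rw [inv_mul_eq_div, div_eq_iff h20]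
      linear_combination ((xL-1)⁻¹)^2 * rel_L
        + (xL * (xL + 1) * (xL-1)⁻¹ + 2 * xL + 1) * hw
    · show H (G (Ideal.Quotient.mk (Ideal.span {pE}) (X 1))) = yL
      have hx := xL_ne_one
      rw [G_mk, H_mk]
      simp only [Gaux, Haux, aeval_X, Matrix.cons_val_zero, Matrix.cons_val_one, Matrix.head_cons,
        map_mul, map_add, map_sub, map_pow, map_one, map_ofNat, aeval_C]
      have h2 : (algebraMap ℚ (FractionRing ellipticCurveRing)) (1/2) = (2 : FractionRing ellipticCurveRing)⁻¹ := by
        rw [map_div₀, map_one, map_ofNat, one_div]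
      rw [h2]
      haveI : CharZero (FractionRing ellipticCurveRing) :=
        charZero_of_injective_algebraMap (algebraMap ℚ (FractionRing ellipticCurveRing)).injective
      have h20 : (2 : FractionRing ellipticCurveRing) ≠ 0 := two_ne_zero
      have hw : (xL - 1) * (xL - 1)⁻¹ = 1 := mul_inv_cancel₀ hx
      rw [inv_mul_eq_div, div_eq_iff h20]
      linear_combination yL * ((xL-1)⁻¹)^3 * rel_L
        + yL * (xL * (xL + 1) * ((xL-1)⁻¹)^2 + (2 * xL + 1) * (xL-1)⁻¹ + 2) * hw

theorem G_inj : Function.Injective G := by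
  rw [injective_iff_map_eq_zero]
  intro z hz
  have h1 : H (G z) = 0 := by rw [hz, map_zero]
  rw [← RingHom.comp_apply, HG] at h1
  exact IsFractionRing.injective ellipticCurveRing (FractionRing ellipticCurveRing) (by rw [map_zero]; exact h1)

theorem GK_inj : Function.Injective ((algebraMap quarticCurveRing (FractionRing quarticCurveRing)).comp G) :=
  (IsFractionRing.injective quarticCurveRing (FractionRing quarticCurveRing)).comp G_inj

noncomputable def GLm : FractionRing ellipticCurveRing →+* FractionRing quarticCurveRing :=
  IsFractionRing.lift GK_inj

theorem GLm_alg (b : ellipticCurveRing) : GLm (algebraMap ellipticCurveRing (FractionRing ellipticCurveRing) b)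
    = algebraMap quarticCurveRing (FractionRing quarticCurveRing) (G b) :=
  IsFractionRing.lift_algebraMap GK_inj b

theorem d_ne : G (Ideal.Quotient.mk (Ideal.span {pE}) (X 0)) - 1 ≠ 0 := by
  rw [G_mk]
  intro h
  have h2 : Ideal.Quotient.mk (Ideal.span {pC}) (Gaux (X 0) - 1) = 0 := by
    rw [map_sub, map_one]; exact h
  rw [Ideal.Quotient.eq_zero_iff_mem, Ideal.mem_span_singleton] at h2
  obtain ⟨c, hc⟩ := h2
  have := congrArg (aeval ![(0 : ℚ), 1]) hc
  simp only [Gaux, pC, map_sub, map_pow, map_mul, map_add, map_one, map_ofNat, aeval_X, aeval_C,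
    Matrix.cons_val_zero, Matrix.cons_val_one, Matrix.head_cons] at this
  norm_num at this

theorem GLH : GLm.comp H = algebraMap quarticCurveRing (FractionRing quarticCurveRing) := by
  have hd := d_ne
  apply Ideal.Quotient.ringHom_ext
  apply MvPolynomial.ringHom_ext
  · intro r
    exact RingHom.congr_fun (Subsingleton.elim
      (((GLm.comp H).comp (Ideal.Quotient.mk (Ideal.span {pC}))).comp
        (C : ℚ →+* MvPolynomial (Fin 2) ℚ))
      (((algebraMap quarticCurveRing (FractionRing quarticCurveRing)).comp (Ideal.Quotient.mk (Ideal.span {pC}))).comp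
        (C : ℚ →+* MvPolynomial (Fin 2) ℚ))) r
  · have hdL : algebraMap quarticCurveRing (FractionRing quarticCurveRing) (G (Ideal.Quotient.mk (Ideal.span {pE}) (X 0)) - 1)
        ≠ 0 := fun h => hd (IsFractionRing.injective quarticCurveRing (FractionRing quarticCurveRing)
          (by rw [map_zero]; exact h))
    intro i
    have hGLx : GLm (xL - 1)
        = algebraMap quarticCurveRing (FractionRing quarticCurveRing) (G (Ideal.Quotient.mk (Ideal.span {pE}) (X 0)) - 1) := by
      rw [map_sub, map_one, xL, GLm_alg, map_sub, map_one]
    fin_cases i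
    · show GLm (H (Ideal.Quotient.mk (Ideal.span {pC}) (X 0)))
        = algebraMap quarticCurveRing (FractionRing quarticCurveRing) (Ideal.Quotient.mk (Ideal.span {pC}) (X 0))
      rw [H_mk]
      simp only [Haux, aeval_X, Matrix.cons_val_zero]
      rw [map_mul, map_inv₀, hGLx, yL, GLm_alg]
      rw [← div_eq_mul_inv, div_eq_iff hdL, ← map_mul]
      congr 1
      simp only [G_mk]
      have key : Ideal.Quotient.mk (Ideal.span {pC}) (Gaux (X 1))
          = Ideal.Quotient.mk (Ideal.span {pC}) (X 0 * (Gaux (X 0) - 1)) := by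
        apply Ideal.Quotient.eq.mpr
        refine Ideal.mem_span_singleton.mpr ⟨0, ?_⟩
        simp only [Gaux, aeval_X, Matrix.cons_val_zero, Matrix.cons_val_one, Matrix.head_cons]
        linear_combination (-X 0) * hC
      rw [map_mul, map_sub, map_one] at key
      exact key
    · show GLm (H (Ideal.Quotient.mk (Ideal.span {pC}) (X 1)))
        = algebraMap quarticCurveRing (FractionRing quarticCurveRing) (Ideal.Quotient.mk (Ideal.span {pC}) (X 1))
      rw [H_mk]
      simp only [Haux, aeval_X, Matrix.cons_val_one, Matrix.head_cons, Matrix.cons_val_zero]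
      rw [map_mul, map_inv₀, hGLx]
      have hx2 : GLm (xL ^ 2 - 2 * xL - 1) = algebraMap quarticCurveRing (FractionRing quarticCurveRing)
          ((G (Ideal.Quotient.mk (Ideal.span {pE}) (X 0))) ^ 2
            - 2 * G (Ideal.Quotient.mk (Ideal.span {pE}) (X 0)) - 1) := by
        rw [xL]
        simp only [map_sub, map_mul, map_pow, map_one, map_ofNat, GLm_alg]
      rw [hx2, ← div_eq_mul_inv, div_eq_iff hdL, ← map_mul]
      congr 1
      simp only [G_mk]
      have key : Ideal.Quotient.mk (Ideal.span {pC}) (X 1 * (Gaux (X 0) - 1))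
          = Ideal.Quotient.mk (Ideal.span {pC}) (Gaux (X 0) ^ 2 - 2 * Gaux (X 0) - 1) := by
        apply Ideal.Quotient.eq.mpr
        refine Ideal.mem_span_singleton.mpr ⟨C (1/2 : ℚ) ^ 2, ?_⟩
        simp only [Gaux, pC, aeval_X, Matrix.cons_val_zero, Matrix.cons_val_one, Matrix.head_cons]
        linear_combination ((-1 : MvPolynomial (Fin 2) ℚ) + X 1 + X 1 * C (1/2:ℚ)
          - X 1 ^ 2 * C (1/2:ℚ) - 2 * X 0 ^ 2 * C (1/2:ℚ) - X 0 ^ 2 * X 1 * C (1/2:ℚ)) * hC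
      rw [map_mul, map_sub, map_sub, map_sub, map_mul, map_pow, map_one, map_ofNat] at key
      exact key.symm

theorem H_inj : Function.Injective H := by
  rw [injective_iff_map_eq_zero]
  intro z hz
  have h1 : GLm (H z) = 0 := by rw [hz, map_zero]
  rw [← RingHom.comp_apply, GLH] at h1
  exact IsFractionRing.injective quarticCurveRing (FractionRing quarticCurveRing) (by rw [map_zero]; exact h1)

noncomputable def HK : FractionRing quarticCurveRing →+* FractionRing ellipticCurveRing :=
  IsFractionRing.lift H_inj

theorem HK_alg (a : quarticCurveRing) : HK (algebraMap quarticCurveRing (FractionRing quarticCurveRing) a) = H a :=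
  IsFractionRing.lift_algebraMap H_inj a

theorem HKGLm : HK.comp GLm = RingHom.id (FractionRing ellipticCurveRing) := by
  apply IsLocalization.ringHom_ext (nonZeroDivisors ellipticCurveRing)
  refine RingHom.ext fun b => ?_
  simp only [RingHom.comp_apply, RingHom.id_apply, RingHom.coe_comp, Function.comp_apply]
  rw [GLm_alg, HK_alg]
  exact RingHom.congr_fun HG b

theorem GLmHK : GLm.comp HK = RingHom.id (FractionRing quarticCurveRing) := by
  apply IsLocalization.ringHom_ext (nonZeroDivisors quarticCurveRing)
  refine RingHom.ext fun a => ?_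
  simp only [RingHom.comp_apply, RingHom.id_apply, RingHom.coe_comp, Function.comp_apply]
  rw [HK_alg]
  exact RingHom.congr_fun GLH a

noncomputable def e' : FractionRing quarticCurveRing ≃+* FractionRing ellipticCurveRing :=
  RingEquiv.ofRingHom HK GLm HKGLm GLmHK

theorem final : ∀ q : ℚ,
    e' (algebraMap quarticCurveRing (FractionRing quarticCurveRing) (algebraMap ℚ quarticCurveRing q))
      = algebraMap ellipticCurveRing (FractionRing ellipticCurveRing) (algebraMap ℚ ellipticCurveRing q) := by
  intro q
  show HK (algebraMap quarticCurveRing (FractionRing quarticCurveRing) (algebraMap ℚ quarticCurveRing q)) = _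
  rw [HK_alg]
  exact RingHom.congr_fun (Subsingleton.elim (H.comp (algebraMap ℚ quarticCurveRing))
    ((algebraMap ellipticCurveRing (FractionRing ellipticCurveRing)).comp (algebraMap ℚ ellipticCurveRing))) q


/-- The affine plane curve `s² = (t² − 2t − 1)(t² + 2t − 1)` is birationally equivalent over `ℚ`
to the elliptic curve `y² = x³ − x`: their function fields are isomorphic as `ℚ`-extensions. -/
theorem quartic_birational_to_X148 :
    ∃ e : FractionRing quarticCurveRing ≃+* FractionRing ellipticCurveRing,
      ∀ q : ℚ,
        e (algebraMap quarticCurveRing (FractionRing quarticCurveRing)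
            (algebraMap ℚ quarticCurveRing q)) =
          algebraMap ellipticCurveRing (FractionRing ellipticCurveRing)
            (algebraMap ℚ ellipticCurveRing q) := by
  exact ⟨e', final⟩
end
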